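/- arXiv:1512.02021 — 5 statements merged into one kernel-verified Lean document; each statement's English description precedes it below -/
import Mathlib

section
/- A number λ ∈ ℂ is an eigenvalue of L_{0,U} if and only if J_{23}·z² − (J_{12}+J_{34})·z − J_{14} = 0, where z = e^{iλπ}. -/
open MeasureTheory Complex Filter Finset Set
open scoped ENNReal

noncomputable section

/-- The columns of the 2×4 matrix 𝒰 = (C, D). -/
def ucol (C D : Matrix (Fin 2) (Fin 2) ℂ) : Fin 4 → Fin 2 → ℂ :=
  ![fun r => C r 0, fun r => C r 1, fun r => D r 0, fun r => D r 1]

/-- `Jdet C D i j` : the determinant of the 2×2 matrix formed by columns `i` and `j`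
of the 2×4 matrix 𝒰 = (C, D). -/
def Jdet (C D : Matrix (Fin 2) (Fin 2) ℂ) (i j : Fin 4) : ℂ :=
  ucol C D i 0 * ucol C D j 1 - ucol C D i 1 * ucol C D j 0

/-- The rows of 𝒰 = (C, D) are linearly independent. -/
def RowsIndep (C D : Matrix (Fin 2) (Fin 2) ℂ) : Prop :=
  LinearIndependent ℂ ![fun j => ucol C D j 0, fun j => ucol C D j 1]

/-- The characteristic determinant Δ₀(λ) = det (C + D·diag(e^{iλπ}, e^{-iλπ})). -/
def Delta0 (C D : Matrix (Fin 2) (Fin 2) ℂ) (lam : ℂ) : ℂ :=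
  (C + D * !![Complex.exp (I * lam * (Real.pi : ℂ)), 0; 0,
      Complex.exp (-(I * lam * (Real.pi : ℂ)))]).det

/-- The matrix B = diag(-i, i). -/
def Bmat : Matrix (Fin 2) (Fin 2) ℂ := !![-I, 0; 0, I]

/-- The restriction of Lebesgue measure to [0, π]. -/
def mes : MeasureTheory.Measure ℝ := volume.restrict (Set.Icc (0 : ℝ) Real.pi)

/-- `IsAC y g` : y is absolutely continuous on [0,π] with a.e. derivative g
(i.e. g is integrable on [0,π] and y is the indefinite integral of g there). -/
def IsAC (y g : ℝ → Fin 2 → ℂ) : Prop :=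
  (∀ i, IntervalIntegrable (fun t => g t i) volume 0 Real.pi) ∧
  ∀ x ∈ Set.Icc (0 : ℝ) Real.pi, y x = y 0 + fun i => ∫ t in (0 : ℝ)..x, g t i

/-- λ is an eigenvalue of the Dirac operator L_{Q,U}, where U(y) = C·y(0) + D·y(π),
with eigenfunction y : y is nonzero on [0,π], absolutely continuous, satisfies
B·y′(x) + Q(x)·y(x) = λ·y(x) for a.e. x ∈ [0,π], and U(y) = 0. -/
def IsEigenpair (C D : Matrix (Fin 2) (Fin 2) ℂ) (Q : ℝ → Matrix (Fin 2) (Fin 2) ℂ)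
    (lam : ℂ) (y : ℝ → Fin 2 → ℂ) : Prop :=
  (∃ x ∈ Set.Icc (0 : ℝ) Real.pi, y x ≠ 0) ∧
  ∃ g, IsAC y g ∧
    (∀ᵐ x ∂mes, Bmat.mulVec (g x) + (Q x).mulVec (y x) = lam • y x) ∧
    C.mulVec (y 0) + D.mulVec (y Real.pi) = 0

/-- scalar ODE uniqueness on [0,π] -/
lemma ode_scalar (c : ℂ) (f g : ℝ → ℂ)
    (hg : IntervalIntegrable g volume 0 Real.pi)
    (hf : ∀ x ∈ Set.Icc (0:ℝ) Real.pi, f x = f 0 + ∫ t in (0:ℝ)..x, g t)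
    (hae : ∀ᵐ t ∂(volume.restrict (Set.Icc (0:ℝ) Real.pi)), g t = c * f t) :
    ∀ x ∈ Set.Icc (0:ℝ) Real.pi, f x = f 0 * Complex.exp (c * x) := by
  have hpi : (0:ℝ) ≤ Real.pi := Real.pi_pos.le
  have huIcc : Set.uIcc (0:ℝ) Real.pi = Set.Icc 0 Real.pi := uIcc_of_le hpi
  have hcont : ContinuousOn f (Set.Icc (0:ℝ) Real.pi) := by
    have h1 : ContinuousOn (fun x => f 0 + ∫ t in (0:ℝ)..x, g t) (Set.Icc 0 Real.pi) := by
      refine continuousOn_const.add ?_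
      have := intervalIntegral.continuousOn_primitive_interval' hg
        (by rw [huIcc]; exact Set.left_mem_Icc.mpr hpi)
      rwa [huIcc] at this
    exact h1.congr fun x hx => hf x hx
  set u : ℝ → ℂ := fun x => f (Set.projIcc 0 Real.pi hpi x) with hu_def
  have hu_cont : Continuous u := hcont.restrict.comp continuous_projIcc
  have hu_eq : ∀ x ∈ Set.Icc (0:ℝ) Real.pi, u x = f x := fun x hx => by
    rw [hu_def]; simp [Set.projIcc_of_mem hpi hx]
  have key : ∀ x ∈ Set.Icc (0:ℝ) Real.pi, f x = f 0 + c * ∫ t in (0:ℝ)..x, u t := by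
    intro x hx
    rw [hf x hx]
    congr 1
    rw [← intervalIntegral.integral_const_mul]
    apply intervalIntegral.integral_congr_ae
    have h' := (ae_restrict_iff' measurableSet_Icc).mp hae
    filter_upwards [h'] with t ht hts
    have htm : t ∈ Set.Icc (0:ℝ) Real.pi := by
      rw [Set.uIoc_of_le hx.1] at hts
      exact ⟨hts.1.le, hts.2.trans hx.2⟩
    rw [ht htm, hu_eq t htm]
  set Φ : ℝ → ℂ := fun x => f 0 + c * ∫ t in (0:ℝ)..x, u t with hΦ
  have hΦderiv : ∀ x : ℝ, HasDerivAt Φ (c * u x) x := by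
    intro x
    have h1 : HasDerivAt (fun x => ∫ t in (0:ℝ)..x, u t) (u x) x :=
      intervalIntegral.integral_hasDerivAt_right (hu_cont.intervalIntegrable _ _)
        (hu_cont.stronglyMeasurableAtFilter _ _) hu_cont.continuousAt
    exact (h1.const_mul c).const_add (f 0)
  have hlin : ∀ x : ℝ, HasDerivAt (fun x : ℝ => -(c * (x:ℂ))) (-c) x := by
    intro x
    have h0 : HasDerivAt (fun x : ℝ => (x:ℂ)) 1 x := by
      simpa using (hasDerivAt_id x).ofReal_comp
    exact (h0.const_mul c).neg.congr_deriv (by ring)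
  set ψ : ℝ → ℂ := fun x => Φ x * Complex.exp (-(c * x)) with hψ
  have hψconst : ∀ x ∈ Set.Icc (0:ℝ) Real.pi, ψ x = ψ 0 := by
    apply constant_of_has_deriv_right_zero
    · exact (Continuous.mul (continuous_iff_continuousAt.mpr fun x => (hΦderiv x).continuousAt)
        (Complex.continuous_exp.comp ((continuous_const.mul Complex.continuous_ofReal).neg))).continuousOn
    · intro x hx
      have hx' : x ∈ Set.Icc (0:ℝ) Real.pi := Set.Ico_subset_Icc_self hx
      have hd : HasDerivAt ψ (c * u x * Complex.exp (-(c * x)) +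
          Φ x * (Complex.exp (-(c * x)) * (-c))) x :=
        (hΦderiv x).mul (hlin x).cexp
      have hval : c * u x * Complex.exp (-(c * x)) +
          Φ x * (Complex.exp (-(c * x)) * (-c)) = 0 := by
        have h1 : u x = f x := hu_eq x hx'
        have h2 : Φ x = f x := (key x hx').symm
        rw [h1, h2]; ring
      exact (hval ▸ hd).hasDerivWithinAt
  intro x hx
  have h0 : ψ 0 = f 0 := by simp [hψ, hΦ]
  have hx0 := hψconst x hx
  rw [h0] at hx0
  have h2 : Φ x = f x := (key x hx).symm
  rw [hψ] at hx0
  simp only at hx0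
  rw [h2] at hx0
  calc f x = f x * Complex.exp (-(c * x)) * Complex.exp (c * x) := by
        rw [mul_assoc, ← Complex.exp_add, neg_add_cancel, Complex.exp_zero, mul_one]
    _ = f 0 * Complex.exp (c * x) := by rw [hx0]

lemma quad_eq_det (C D : Matrix (Fin 2) (Fin 2) ℂ) (z w : ℂ) (hzw : z * w = 1) :
    Jdet C D 1 2 * z ^ 2 - (Jdet C D 0 1 + Jdet C D 2 3) * z - Jdet C D 0 3 =
      -z * (C + D * !![z, 0; 0, w]).det := by
  simp only [Jdet, ucol, Matrix.det_fin_two, Matrix.add_apply, Matrix.mul_apply,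
    Fin.sum_univ_two, Matrix.cons_val', Matrix.cons_val_zero, Matrix.cons_val_one,
    Matrix.head_cons, Matrix.empty_val', Matrix.cons_val_fin_one, Matrix.head_fin_const,
    Matrix.cons_val_two, Matrix.cons_val_three, Matrix.tail_cons, Matrix.of_apply]
  linear_combination ((D 0 0 * D 1 1 - D 1 0 * D 0 1) * z + (C 0 0 * D 1 1 - C 1 0 * D 0 1)) * hzw

lemma Bmat_mulVec (v : Fin 2 → ℂ) : Bmat.mulVec v = ![-I * v 0, I * v 1] := by
  funext i; fin_cases i <;>
    simp [Bmat, Matrix.mulVec, dotProduct, Fin.sum_univ_two, Matrix.vecHead, Matrix.vecTail]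

/-- FTC for complex exponential -/
lemma integral_cexp (c a : ℂ) (x : ℝ) :
    ∫ t in (0:ℝ)..x, c * (a * Complex.exp (c * t)) = a * Complex.exp (c * x) - a := by
  have hcont : Continuous fun t : ℝ => c * (a * Complex.exp (c * t)) := by
    exact continuous_const.mul (continuous_const.mul
      (Complex.continuous_exp.comp (continuous_const.mul Complex.continuous_ofReal)))
  have hd : ∀ t ∈ Set.uIcc (0:ℝ) x,
      HasDerivAt (fun s : ℝ => a * Complex.exp (c * s)) (c * (a * Complex.exp (c * t))) t := by
    intro t _
    have h0 : HasDerivAt (fun s : ℝ => (s:ℂ)) 1 t := by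
      simpa using (hasDerivAt_id t).ofReal_comp
    have h1 : HasDerivAt (fun s : ℝ => c * (s:ℂ)) c t := by simpa using h0.const_mul c
    have h2 := h1.cexp.const_mul a
    simpa [mul_comm, mul_assoc, mul_left_comm] using h2
  have := intervalIntegral.integral_eq_sub_of_hasDerivAt hd (hcont.intervalIntegrable _ _)
  rw [this]
  simp

/-- λ ∈ ℂ is an eigenvalue of L_{0,U} if and only if
J₂₃·z² − (J₁₂+J₃₄)·z − J₁₄ = 0 where z = e^{iλπ}. -/
theorem eigenvalue_iff_quadratic_root (C D : Matrix (Fin 2) (Fin 2) ℂ)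
    (hU : RowsIndep C D) (lam : ℂ) :
    (∃ y : ℝ → Fin 2 → ℂ, IsEigenpair C D (fun _ => 0) lam y) ↔
      Jdet C D 1 2 * Complex.exp (I * lam * (Real.pi : ℂ)) ^ 2 -
        (Jdet C D 0 1 + Jdet C D 2 3) * Complex.exp (I * lam * (Real.pi : ℂ)) -
        Jdet C D 0 3 = 0 := by
  have hpi : (0:ℝ) ≤ Real.pi := Real.pi_pos.le
  set z : ℂ := Complex.exp (I * lam * (Real.pi : ℂ)) with hz_def
  set w : ℂ := Complex.exp (-(I * lam * (Real.pi : ℂ))) with hw_def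
  have hzw : z * w = 1 := by
    rw [hz_def, hw_def, ← Complex.exp_add, add_neg_cancel, Complex.exp_zero]
  have hz0 : z ≠ 0 := Complex.exp_ne_zero _
  set M : Matrix (Fin 2) (Fin 2) ℂ := C + D * !![z, 0; 0, w] with hM_def
  have hquad := quad_eq_det C D z w hzw
  have hiff : (∃ y : ℝ → Fin 2 → ℂ, IsEigenpair C D (fun _ => 0) lam y) ↔ M.det = 0 := by
    constructor
    · rintro ⟨y, ⟨x₀, hx₀, hy₀⟩, g, ⟨hgint, hy⟩, hae, hbc⟩
      -- component equations
      have hae' : ∀ᵐ x ∂(volume.restrict (Set.Icc (0:ℝ) Real.pi)),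
          Bmat.mulVec (g x) = lam • y x := by
        have : mes = volume.restrict (Set.Icc (0:ℝ) Real.pi) := rfl
        rw [← this]
        filter_upwards [hae] with x hx
        simpa [Matrix.zero_mulVec] using hx
      have hcomp : ∀ i : Fin 2, ∀ x ∈ Set.Icc (0:ℝ) Real.pi,
          y x i = y 0 i + ∫ t in (0:ℝ)..x, g t i := by
        intro i x hx
        have := congrFun (hy x hx) i
        simpa using this
      have h0 : ∀ x ∈ Set.Icc (0:ℝ) Real.pi,
          y x 0 = y 0 0 * Complex.exp ((I * lam) * x) := by
        apply ode_scalar (I * lam) _ _ (hgint 0) (hcomp 0)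
        filter_upwards [hae'] with t ht
        have := congrFun ht 0
        rw [Bmat_mulVec] at this
        simp only [Matrix.cons_val_zero, Pi.smul_apply, smul_eq_mul] at this
        have h2 : g t 0 = I * (lam * y t 0) := by
          have := congrArg (fun u => I * u) this
          simpa [← mul_assoc, Complex.I_mul_I] using this
        rw [h2]; ring
      have h1 : ∀ x ∈ Set.Icc (0:ℝ) Real.pi,
          y x 1 = y 0 1 * Complex.exp ((-(I * lam)) * x) := by
        apply ode_scalar (-(I * lam)) _ _ (hgint 1) (hcomp 1)
        filter_upwards [hae'] with t ht
        have := congrFun ht 1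
        rw [Bmat_mulVec] at this
        simp only [Matrix.cons_val_one, Matrix.head_cons, Pi.smul_apply, smul_eq_mul] at this
        have h2 : g t 1 = -I * (lam * y t 1) := by
          have := congrArg (fun u => -I * u) this
          simpa [← mul_assoc, Complex.I_mul_I] using this
        rw [h2]; ring
      have hv : y 0 ≠ 0 := by
        intro h
        apply hy₀
        funext i
        fin_cases i
        · show y x₀ 0 = 0
          rw [h0 x₀ hx₀]; simp [h]
        · show y x₀ 1 = 0
          rw [h1 x₀ hx₀]; simp [h]
      have hπmem : Real.pi ∈ Set.Icc (0:ℝ) Real.pi := Set.right_mem_Icc.mpr hpi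
      have hπ0 : y Real.pi 0 = y 0 0 * z := by
        rw [h0 Real.pi hπmem, hz_def]
      have hπ1 : y Real.pi 1 = y 0 1 * w := by
        rw [h1 Real.pi hπmem, hw_def, neg_mul]
      have hMv : M.mulVec (y 0) = 0 := by
        rw [show M.mulVec (y 0) = C.mulVec (y 0) + D.mulVec (y Real.pi) from ?_, hbc]
        funext i
        fin_cases i <;>
          simp [hM_def, Matrix.mulVec, dotProduct, Matrix.add_apply, Matrix.mul_apply,
            Fin.sum_univ_two, hπ0, hπ1] <;> ring
      exact Matrix.exists_mulVec_eq_zero_iff.mp ⟨y 0, hv, hMv⟩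
    · intro hdet
      obtain ⟨v, hv, hMv⟩ := Matrix.exists_mulVec_eq_zero_iff.mpr hdet
      set y : ℝ → Fin 2 → ℂ := fun x =>
        ![v 0 * Complex.exp ((I * lam) * x), v 1 * Complex.exp ((-(I * lam)) * x)] with hy_def
      set g : ℝ → Fin 2 → ℂ := fun x =>
        ![(I * lam) * (v 0 * Complex.exp ((I * lam) * x)),
          (-(I * lam)) * (v 1 * Complex.exp ((-(I * lam)) * x))] with hg_def
      have hy0 : y 0 = v := by
        funext i; fin_cases i <;> simp [hy_def]
      refine ⟨y, ⟨0, Set.left_mem_Icc.mpr hpi, by rw [hy0]; exact hv⟩, g, ⟨?_, ?_⟩, ?_, ?_⟩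
      · intro i
        fin_cases i <;>
        · apply Continuous.intervalIntegrable
          continuity
      · intro x hx
        funext i
        simp only [Pi.add_apply]
        fin_cases i <;>
        · simp only [hy_def, hg_def, Fin.zero_eta, Fin.mk_one, Matrix.cons_val_zero,
            Matrix.cons_val_one, Matrix.head_cons]
          rw [integral_cexp]
          simp
      · apply Filter.Eventually.of_forall
        intro x
        funext i
        rw [Bmat_mulVec]
        fin_cases i
        · simp only [hy_def, hg_def, Fin.zero_eta, Fin.mk_one, Matrix.cons_val_zero,
            Matrix.cons_val_one, Matrix.head_cons, Pi.add_apply, Pi.smul_apply, smul_eq_mul,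
            Matrix.zero_mulVec, Pi.zero_apply, add_zero]
          linear_combination (-lam * (v 0 * Complex.exp (I * lam * (x:ℂ)))) * Complex.I_mul_I
        · simp only [hy_def, hg_def, Fin.zero_eta, Fin.mk_one, Matrix.cons_val_zero,
            Matrix.cons_val_one, Matrix.head_cons, Pi.add_apply, Pi.smul_apply, smul_eq_mul,
            Matrix.zero_mulVec, Pi.zero_apply, add_zero]
          linear_combination (-lam * (v 1 * Complex.exp (-(I * lam) * (x:ℂ)))) * Complex.I_mul_I
      · have hπ0 : y Real.pi 0 = v 0 * z := by simp [hy_def, hz_def]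
        have hπ1 : y Real.pi 1 = v 1 * w := by
          simp only [hy_def, Matrix.cons_val_one, Matrix.head_cons, Matrix.cons_val_fin_one]
          rw [hw_def, neg_mul]
        rw [hy0]
        rw [show C.mulVec v + D.mulVec (y Real.pi) = M.mulVec v from ?_, hMv]
        funext i
        fin_cases i <;>
          simp [hM_def, Matrix.mulVec, dotProduct, Matrix.add_apply, Matrix.mul_apply,
            Fin.sum_univ_two, hπ0, hπ1] <;> ring
  rw [hiff, hquad]
  constructor
  · intro h; rw [h, mul_zero]
  · intro h
    rcases mul_eq_zero.mp h with h' | h'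
    · exact absurd h' (neg_ne_zero.mpr hz0)
    · exact h'

end
end

section
/- Assume the boundary conditions are regular, i.e. J_{14}·J_{23} ≠ 0, and let z0, z1 ∈ ℂ be the two roots (listed with multiplicity) of the quadratic equation J_{23}·z² − (J_{12}+J_{34})·z − J_{14} = 0. Then z0 ≠ 0, z1 ≠ 0, and the set of eigenvalues of L_{0,U} equals { −(i/π)·log z0 + 2n : n ∈ ℤ } ∪ { −(i/π)·log z1 + 2n : n ∈ ℤ }, where log denotes the branch of the logarithm with imaginary part in (−π, π]. -/
open MeasureTheory Complex Filter Finset Set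
open scoped ENNReal Topology

noncomputable section

lemma detM_eq (C D : Matrix (Fin 2) (Fin 2) ℂ) (z w : ℂ) :
    (C + D * !![z, 0; 0, w]).det =
      Jdet C D 0 1 + Jdet C D 2 3 * (z * w) + Jdet C D 0 3 * w - Jdet C D 1 2 * z := by
  simp [Matrix.det_fin_two, Matrix.add_apply, Matrix.mul_apply, Fin.sum_univ_two, Jdet, ucol]
  ring

lemma exp_lam_pi_eq_iff (lam u : ℂ) (hu : u ≠ 0) :
    Complex.exp (I * lam * (Real.pi : ℂ)) = u ↔
      ∃ n : ℤ, lam = -(I / (Real.pi : ℂ)) * Complex.log u + 2 * (n : ℂ) := by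
  have hpi : (Real.pi : ℂ) ≠ 0 := Complex.ofReal_ne_zero.mpr Real.pi_ne_zero
  constructor
  · intro h
    rw [← Complex.exp_log hu, Complex.exp_eq_exp_iff_exists_int] at h
    obtain ⟨n, h⟩ := h
    refine ⟨n, ?_⟩
    field_simp
    linear_combination (-I) * h + (lam * (Real.pi : ℂ) - 2 * (Real.pi : ℂ) * (n:ℂ)) * Complex.I_sq
  · rintro ⟨n, h⟩
    rw [← Complex.exp_log hu, Complex.exp_eq_exp_iff_exists_int]
    refine ⟨n, ?_⟩
    rw [h]
    field_simp
    linear_combination (-(Complex.log u)) * Complex.I_sq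

lemma cexp_mul_hasDerivAt (c v : ℂ) (t : ℝ) :
    HasDerivAt (fun s : ℝ => v * Complex.exp (c * s)) (c * v * Complex.exp (c * t)) t := by
  have h1 : HasDerivAt (fun w : ℂ => v * Complex.exp (c * w))
      (v * (Complex.exp (c * (t : ℂ)) * (c * 1))) (t : ℂ) :=
    (((hasDerivAt_id ((t : ℝ) : ℂ)).const_mul c).cexp).const_mul v
  have h2 := h1.comp_ofReal
  convert h2 using 1
  ring

lemma scalar_ode (c a : ℂ) (b : ℝ) (hb : 0 ≤ b) (f : ℝ → ℂ)
    (hf : ContinuousOn f (Icc 0 b))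
    (heq : ∀ x ∈ Icc (0:ℝ) b, f x = a + c * ∫ t in (0:ℝ)..x, f t) :
    ∀ x ∈ Icc (0:ℝ) b, f x = a * Complex.exp (c * x) := by
  set F : ℝ → ℂ := fun x => ∫ t in (0:ℝ)..x, f t with hF
  have hfi : IntegrableOn f (Icc 0 b) volume := hf.integrableOn_Icc
  have hFc : ContinuousOn F (Icc 0 b) := by
    have := intervalIntegral.continuousOn_primitive_interval
      (a := (0:ℝ)) (b := b) (μ := volume) (f := f) (by rwa [uIcc_of_le hb])
    rwa [uIcc_of_le hb] at this
  set H : ℝ → ℂ := fun x => Complex.exp (-(c * x)) * (a + c * F x) with hHdef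
  have hHderiv : ∀ x ∈ Ico (0:ℝ) b, HasDerivWithinAt H 0 (Ici x) x := by
    intro x hx
    have hxI : x ∈ Icc (0:ℝ) b := ⟨hx.1, hx.2.le⟩
    have hmem : Icc (0:ℝ) b ∈ 𝓝[>] x := by
      filter_upwards [self_mem_nhdsWithin,
        mem_nhdsWithin_of_mem_nhds (Iio_mem_nhds hx.2)] with t ht1 ht2
      exact ⟨le_of_lt (lt_of_le_of_lt hx.1 ht1), le_of_lt ht2⟩
    have hmeas : StronglyMeasurableAtFilter f (𝓝[>] x) volume :=
      ⟨Icc 0 b, hmem, hf.aestronglyMeasurable measurableSet_Icc⟩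
    have hcont : ContinuousWithinAt f (Ioi x) x :=
      (hf x hxI).mono_of_mem_nhdsWithin hmem
    have hii : IntervalIntegrable f volume 0 x :=
      (hfi.mono_set (by rw [uIcc_of_le hx.1]; exact Icc_subset_Icc le_rfl hx.2.le)).intervalIntegrable
    have hFd : HasDerivWithinAt F (f x) (Ici x) x :=
      intervalIntegral.integral_hasDerivWithinAt_right hii hmeas hcont
    have hed : HasDerivAt (fun s : ℝ => Complex.exp (-(c * s))) (-c * Complex.exp (-(c * x))) x := by
      have h3 := cexp_mul_hasDerivAt (-c) 1 x
      simp only [one_mul, neg_mul, mul_one] at h3 ⊢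
      convert h3 using 2
    have h4 := (hed.hasDerivWithinAt (s := Ici x)).mul ((hFd.const_mul c).const_add a)
    refine h4.congr_deriv ?_
    rw [heq x hxI]
    ring
  have hHc : ContinuousOn H (Icc 0 b) := by
    apply ContinuousOn.mul
    · exact (Complex.continuous_exp.comp (by continuity)).continuousOn
    · exact continuousOn_const.add (continuousOn_const.mul hFc)
  have hconst := constant_of_has_deriv_right_zero hHc hHderiv
  intro x hx
  have hx0 := hconst x hx
  have hH0 : H 0 = a := by simp [hHdef, hF]
  rw [hH0] at hx0
  have h5 : f x = Complex.exp (c * x) * H x := by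
    rw [hHdef]
    simp only
    rw [← mul_assoc, ← Complex.exp_add]
    simp [← heq x hx]
    exact heq x hx
  rw [h5, hx0, mul_comm]

/-- the key spectral characterization -/
lemma eigen_iff (C D : Matrix (Fin 2) (Fin 2) ℂ)
    (hreg : Jdet C D 0 3 * Jdet C D 1 2 ≠ 0) (z0 z1 : ℂ)
    (hroots : ∀ z : ℂ,
      Jdet C D 1 2 * z ^ 2 - (Jdet C D 0 1 + Jdet C D 2 3) * z - Jdet C D 0 3 =
        Jdet C D 1 2 * (z - z0) * (z - z1)) (lam : ℂ) :
    (∃ y : ℝ → Fin 2 → ℂ, IsEigenpair C D (fun _ => 0) lam y) ↔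
      (Complex.exp (I * lam * (Real.pi : ℂ)) = z0 ∨
       Complex.exp (I * lam * (Real.pi : ℂ)) = z1) := by
  have hJ23 : Jdet C D 1 2 ≠ 0 := right_ne_zero_of_mul hreg
  have hpi : (0:ℝ) ≤ Real.pi := Real.pi_pos.le
  set z : ℂ := Complex.exp (I * lam * (Real.pi : ℂ)) with hz
  set w : ℂ := Complex.exp (-(I * lam * (Real.pi : ℂ))) with hw
  have hzw : z * w = 1 := by rw [hz, hw, ← Complex.exp_add]; simp
  constructor
  · rintro ⟨y, ⟨x₀, hx₀, hy₀⟩, g, ⟨hgint, hy⟩, hode, hbc⟩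
    -- componentwise a.e. ODE
    have hode2 : ∀ᵐ t ∂(volume.restrict (Set.Icc (0:ℝ) Real.pi)),
        Bmat.mulVec (g t) + (0 : Matrix (Fin 2) (Fin 2) ℂ).mulVec (y t) = lam • y t := hode
    have hode' : ∀ᵐ t ∂(volume : Measure ℝ), t ∈ Set.Icc (0:ℝ) Real.pi →
        (g t 0 = I * lam * y t 0 ∧ g t 1 = -(I * lam) * y t 1) := by
      filter_upwards [(ae_restrict_iff' measurableSet_Icc).mp hode2] with t ht hmem
      have h := ht hmem
      have h0 := congrFun h 0
      have h1 := congrFun h 1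
      simp [Bmat, Matrix.mulVec, dotProduct, Fin.sum_univ_two,
        Matrix.zero_mulVec, Matrix.vecHead, Matrix.vecTail] at h0 h1
      constructor
      · linear_combination I * h0 + g t 0 * Complex.I_sq
      · linear_combination (-I) * h1 + g t 1 * Complex.I_sq
    -- continuity of components
    have hyc : ∀ i, ContinuousOn (fun x => y x i) (Set.Icc (0:ℝ) Real.pi) := by
      intro i
      have hgi : IntegrableOn (fun t => g t i) (Set.Icc (0:ℝ) Real.pi) volume :=
        (intervalIntegrable_iff_integrableOn_Icc_of_le hpi).mp (hgint i)
      have hGc : ContinuousOn (fun x => ∫ t in (0:ℝ)..x, g t i) (Set.Icc (0:ℝ) Real.pi) := by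
        have := intervalIntegral.continuousOn_primitive_interval
          (a := (0:ℝ)) (b := Real.pi) (μ := volume) (f := fun t => g t i)
          (by rwa [uIcc_of_le hpi])
        rwa [uIcc_of_le hpi] at this
      refine ContinuousOn.congr (f := fun x => y 0 i + ∫ t in (0:ℝ)..x, g t i)
        ((continuousOn_const (c := y 0 i)).add hGc) ?_
      intro x hx
      have := congrFun (hy x hx) i
      simpa using this
    -- integral equations
    have hint_eq : ∀ i : Fin 2, ∀ c : ℂ,
        (∀ᵐ t ∂(volume : Measure ℝ), t ∈ Set.Icc (0:ℝ) Real.pi → g t i = c * y t i) →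
        ∀ x ∈ Set.Icc (0:ℝ) Real.pi, y x i = y 0 i + c * ∫ t in (0:ℝ)..x, y t i := by
      intro i c hc x hx
      have hxeq := congrFun (hy x hx) i
      simp only [Pi.add_apply] at hxeq
      rw [hxeq]
      congr 1
      rw [← intervalIntegral.integral_const_mul]
      apply intervalIntegral.integral_congr_ae
      filter_upwards [hc] with t ht hmt
      rw [uIoc_of_le hx.1] at hmt
      exact ht ⟨hmt.1.le, hmt.2.trans hx.2⟩
    have hsol0 : ∀ x ∈ Set.Icc (0:ℝ) Real.pi, y x 0 = y 0 0 * Complex.exp (I * lam * x) :=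
      scalar_ode (I * lam) (y 0 0) Real.pi hpi _ (hyc 0)
        (hint_eq 0 (I * lam) (by filter_upwards [hode'] with t ht hm; exact (ht hm).1))
    have hsol1 : ∀ x ∈ Set.Icc (0:ℝ) Real.pi, y x 1 = y 0 1 * Complex.exp (-(I * lam) * x) :=
      scalar_ode (-(I * lam)) (y 0 1) Real.pi hpi _ (hyc 1)
        (hint_eq 1 (-(I * lam)) (by filter_upwards [hode'] with t ht hm; exact (ht hm).2))
    have hvne : y 0 ≠ 0 := by
      intro h0
      apply hy₀
      funext i
      fin_cases i
      · show y x₀ 0 = 0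
        rw [hsol0 x₀ hx₀, congrFun h0 0]; simp
      · show y x₀ 1 = 0
        rw [hsol1 x₀ hx₀, congrFun h0 1]; simp
    have hyπ : y Real.pi = (!![z, 0; 0, w]).mulVec (y 0) := by
      funext i
      fin_cases i
      · show y Real.pi 0 = (!![z, 0; 0, w]).mulVec (y 0) 0
        rw [hsol0 Real.pi ⟨hpi, le_rfl⟩]
        simp [Matrix.mulVec, dotProduct, Fin.sum_univ_two, hz, Matrix.vecHead, Matrix.vecTail]
        ring
      · show y Real.pi 1 = (!![z, 0; 0, w]).mulVec (y 0) 1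
        rw [hsol1 Real.pi ⟨hpi, le_rfl⟩]
        simp [Matrix.mulVec, dotProduct, Fin.sum_univ_two, hw, Matrix.vecHead, Matrix.vecTail]
        ring_nf
    have hMv : (C + D * !![z, 0; 0, w]).mulVec (y 0) = 0 := by
      rw [Matrix.add_mulVec, ← Matrix.mulVec_mulVec, ← hyπ]
      exact hbc
    have hdet : (C + D * !![z, 0; 0, w]).det = 0 :=
      Matrix.exists_mulVec_eq_zero_iff.mp ⟨y 0, hvne, hMv⟩
    rw [detM_eq] at hdet
    have hquad : Jdet C D 1 2 * (z - z0) * (z - z1) = 0 := by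
      rw [← hroots z]
      linear_combination (-z) * hdet + (Jdet C D 0 3 + z * Jdet C D 2 3) * hzw
    rcases mul_eq_zero.mp hquad with h | h
    · rcases mul_eq_zero.mp h with h' | h'
      · exact absurd h' hJ23
      · exact Or.inl (sub_eq_zero.mp h')
    · exact Or.inr (sub_eq_zero.mp h)
  · intro h
    have hprod : (z - z0) * (z - z1) = 0 := by
      rcases h with h | h <;> rw [h] <;> ring
    have hq : Jdet C D 1 2 * z ^ 2 - (Jdet C D 0 1 + Jdet C D 2 3) * z - Jdet C D 0 3 = 0 := by
      rw [hroots z]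
      linear_combination Jdet C D 1 2 * hprod
    have hdet : (C + D * !![z, 0; 0, w]).det = 0 := by
      rw [detM_eq]
      linear_combination (-w) * hq + (Jdet C D 1 2 * z - (Jdet C D 0 1 + Jdet C D 2 3) + Jdet C D 2 3) * hzw
    obtain ⟨v, hvne, hMv⟩ := Matrix.exists_mulVec_eq_zero_iff.mpr hdet
    refine ⟨fun x => ![v 0 * Complex.exp (I * lam * x), v 1 * Complex.exp (-(I * lam) * x)],
      ⟨0, ⟨le_refl 0, hpi⟩, ?_⟩,
      fun x => ![I * lam * (v 0 * Complex.exp (I * lam * x)),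
        -(I * lam) * (v 1 * Complex.exp (-(I * lam) * x))], ⟨?_, ?_⟩, ?_, ?_⟩
    · intro h0
      apply hvne
      funext i
      fin_cases i
      · have := congrFun h0 0; simpa using this
      · have := congrFun h0 1; simpa using this
    · intro i
      fin_cases i
      · show IntervalIntegrable
          (fun t : ℝ => I * lam * (v 0 * Complex.exp (I * lam * t))) volume 0 Real.pi
        apply Continuous.intervalIntegrable; fun_prop
      · show IntervalIntegrable
          (fun t : ℝ => -(I * lam) * (v 1 * Complex.exp (-(I * lam) * t))) volume 0 Real.pi
        apply Continuous.intervalIntegrable; fun_prop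
    · intro x hx
      funext i
      fin_cases i
      · show v 0 * Complex.exp (I * lam * (x:ℂ)) =
          v 0 * Complex.exp (I * lam * ((0:ℝ):ℂ)) +
            ∫ t in (0:ℝ)..x, I * lam * (v 0 * Complex.exp (I * lam * t))
        have hFT : ∫ t in (0:ℝ)..x, (I * lam) * (v 0) * Complex.exp (I * lam * t) =
            v 0 * Complex.exp (I * lam * (x:ℂ)) - v 0 * Complex.exp (I * lam * ((0:ℝ):ℂ)) := by
          apply intervalIntegral.integral_eq_sub_of_hasDerivAt
            (fun t _ => cexp_mul_hasDerivAt (I * lam) (v 0) t)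
          apply Continuous.intervalIntegrable
          fun_prop
        rw [show (fun t : ℝ => I * lam * (v 0 * Complex.exp (I * lam * t))) =
            (fun t : ℝ => (I * lam) * (v 0) * Complex.exp (I * lam * t)) from by funext t; ring,
          hFT]
        simp
      · show v 1 * Complex.exp (-(I * lam) * (x:ℂ)) =
          v 1 * Complex.exp (-(I * lam) * ((0:ℝ):ℂ)) +
            ∫ t in (0:ℝ)..x, -(I * lam) * (v 1 * Complex.exp (-(I * lam) * t))
        have hFT : ∫ t in (0:ℝ)..x, (-(I * lam)) * (v 1) * Complex.exp (-(I * lam) * t) =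
            v 1 * Complex.exp (-(I * lam) * (x:ℂ)) - v 1 * Complex.exp (-(I * lam) * ((0:ℝ):ℂ)) := by
          apply intervalIntegral.integral_eq_sub_of_hasDerivAt
            (fun t _ => cexp_mul_hasDerivAt (-(I * lam)) (v 1) t)
          apply Continuous.intervalIntegrable
          fun_prop
        rw [show (fun t : ℝ => -(I * lam) * (v 1 * Complex.exp (-(I * lam) * t))) =
            (fun t : ℝ => (-(I * lam)) * (v 1) * Complex.exp (-(I * lam) * t)) from by funext t; ring,
          hFT]
        simp
    · apply Filter.Eventually.of_forall
      intro x
      funext i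
      fin_cases i
      · simp [Bmat, Matrix.mulVec, dotProduct, Fin.sum_univ_two, Matrix.zero_mulVec]
        linear_combination (-(lam * (v 0 * Complex.exp (I * lam * (x:ℂ))))) * Complex.I_sq
      · simp [Bmat, Matrix.mulVec, dotProduct, Fin.sum_univ_two, Matrix.zero_mulVec,
          neg_mul]
        linear_combination (-(lam * (v 1 * Complex.exp (-(I * lam * (x:ℂ)))))) * Complex.I_sq
    · have h1 : (![v 0 * Complex.exp (I * lam * ((0:ℝ):ℂ)),
          v 1 * Complex.exp (-(I * lam) * ((0:ℝ):ℂ))] : Fin 2 → ℂ) = v := by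
        funext i
        fin_cases i
        · show v 0 * Complex.exp (I * lam * ((0:ℝ):ℂ)) = v 0
          simp
        · show v 1 * Complex.exp (-(I * lam) * ((0:ℝ):ℂ)) = v 1
          simp
      have h2 : (![v 0 * Complex.exp (I * lam * ((Real.pi:ℝ):ℂ)),
          v 1 * Complex.exp (-(I * lam) * ((Real.pi:ℝ):ℂ))] : Fin 2 → ℂ)
          = (!![z, 0; 0, w]).mulVec v := by
        funext i
        fin_cases i
        · show v 0 * Complex.exp (I * lam * ((Real.pi:ℝ):ℂ)) = (!![z, 0; 0, w]).mulVec v 0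
          simp [Matrix.mulVec, dotProduct, Fin.sum_univ_two, hz, Matrix.vecHead, Matrix.vecTail]
          ring
        · show v 1 * Complex.exp (-(I * lam) * ((Real.pi:ℝ):ℂ)) = (!![z, 0; 0, w]).mulVec v 1
          simp [Matrix.mulVec, dotProduct, Fin.sum_univ_two, hw, neg_mul, Matrix.vecHead, Matrix.vecTail]
          ring_nf
      show C.mulVec (![v 0 * Complex.exp (I * lam * ((0:ℝ):ℂ)),
          v 1 * Complex.exp (-(I * lam) * ((0:ℝ):ℂ))] : Fin 2 → ℂ) +
        D.mulVec (![v 0 * Complex.exp (I * lam * ((Real.pi:ℝ):ℂ)),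
          v 1 * Complex.exp (-(I * lam) * ((Real.pi:ℝ):ℂ))] : Fin 2 → ℂ) = 0
      rw [h1, h2, Matrix.mulVec_mulVec, ← Matrix.add_mulVec]
      exact hMv

/-- for regular boundary conditions (J₁₄·J₂₃ ≠ 0), if z₀, z₁ are the two
roots (with multiplicity) of J₂₃·z² − (J₁₂+J₃₄)·z − J₁₄ = 0, then z₀ ≠ 0, z₁ ≠ 0 and
the set of eigenvalues of L_{0,U} is
{ −(i/π)·log z₀ + 2n : n ∈ ℤ } ∪ { −(i/π)·log z₁ + 2n : n ∈ ℤ },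
where log is the branch with imaginary part in (−π, π] (this is `Complex.log`). -/
theorem spectrum_free_dirac (C D : Matrix (Fin 2) (Fin 2) ℂ) (hU : RowsIndep C D)
    (hreg : Jdet C D 0 3 * Jdet C D 1 2 ≠ 0) (z0 z1 : ℂ)
    (hroots : ∀ z : ℂ,
      Jdet C D 1 2 * z ^ 2 - (Jdet C D 0 1 + Jdet C D 2 3) * z - Jdet C D 0 3 =
        Jdet C D 1 2 * (z - z0) * (z - z1)) :
    z0 ≠ 0 ∧ z1 ≠ 0 ∧
      {lam : ℂ | ∃ y : ℝ → Fin 2 → ℂ, IsEigenpair C D (fun _ => 0) lam y} =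
        {lam : ℂ | ∃ n : ℤ, lam = -(I / (Real.pi : ℂ)) * Complex.log z0 + 2 * (n : ℂ)} ∪
        {lam : ℂ | ∃ n : ℤ, lam = -(I / (Real.pi : ℂ)) * Complex.log z1 + 2 * (n : ℂ)} := by

  have hJ14 : Jdet C D 0 3 ≠ 0 := left_ne_zero_of_mul hreg
  have hzz : Jdet C D 1 2 * z0 * z1 = -(Jdet C D 0 3) := by
    linear_combination (-1 : ℂ) * hroots 0
  have hz0 : z0 ≠ 0 := by
    intro h; apply hJ14
    have h2 := hzz; rw [h] at h2
    linear_combination h2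
  have hz1 : z1 ≠ 0 := by
    intro h; apply hJ14
    have h2 := hzz; rw [h] at h2
    linear_combination h2
  refine ⟨hz0, hz1, ?_⟩
  ext lam
  simp only [Set.mem_setOf_eq, Set.mem_union]
  rw [show (∃ y : ℝ → Fin 2 → ℂ, IsEigenpair C D (fun _ => 0) lam y) ↔ _ from
    eigen_iff C D hreg z0 z1 hroots lam,
    exp_lam_pi_eq_iff lam z0 hz0, exp_lam_pi_eq_iff lam z1 hz1]


end
end

section
/- If the boundary conditions are regular, i.e. J_{14}·J_{23} ≠ 0, then there exist constants a ≥ 1 and c > 0, depending only on C and D, such that |Δ0(λ)| ≥ c·e^{π·|Im λ|} for every λ ∈ ℂ with |Im λ| ≥ a. -/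
open MeasureTheory Complex Filter Finset Set
open scoped ENNReal

noncomputable section

lemma delta0_eq' (C D : Matrix (Fin 2) (Fin 2) ℂ) (lam : ℂ) :
    Delta0 C D lam = (Jdet C D 0 1 + Jdet C D 2 3)
      + Complex.exp (-(I * lam * (Real.pi : ℂ))) * Jdet C D 0 3
      - Complex.exp (I * lam * (Real.pi : ℂ)) * Jdet C D 1 2 := by
  have hef : Complex.exp (I * lam * (Real.pi : ℂ)) * Complex.exp (-(I * lam * (Real.pi : ℂ))) = 1 := by
    rw [← Complex.exp_add, add_neg_cancel, Complex.exp_zero]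
  simp only [Delta0, Jdet, ucol, Matrix.det_fin_two, Matrix.add_apply, Matrix.mul_apply,
    Fin.sum_univ_two, Matrix.cons_val', Matrix.cons_val_zero, Matrix.cons_val_one,
    Matrix.head_cons, Matrix.empty_val', Matrix.cons_val_fin_one, Matrix.head_fin_const,
    Matrix.of_apply, Matrix.cons_val_two, Matrix.cons_val_three, Matrix.tail_cons]
  ring_nf
  linear_combination (D 0 0 * D 1 1 - D 0 1 * D 1 0) * hef

/-- for regular boundary conditions there exist a ≥ 1 and c > 0
(depending only on C and D) with |Δ₀(λ)| ≥ c·e^{π|Im λ|} whenever |Im λ| ≥ a. -/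
theorem delta0_lower_bound (C D : Matrix (Fin 2) (Fin 2) ℂ) (hU : RowsIndep C D)
    (hreg : Jdet C D 0 3 * Jdet C D 1 2 ≠ 0) :
    ∃ a ≥ (1 : ℝ), ∃ c > (0 : ℝ), ∀ lam : ℂ, a ≤ |lam.im| →
      c * Real.exp (Real.pi * |lam.im|) ≤ ‖Delta0 C D lam‖ := by
  set J14 := Jdet C D 0 3 with hJ14
  set J23 := Jdet C D 1 2 with hJ23
  set A := Jdet C D 0 1 + Jdet C D 2 3 with hA
  have h14 : J14 ≠ 0 := fun h => hreg (by rw [h, zero_mul])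
  have h23 : J23 ≠ 0 := fun h => hreg (by rw [h, mul_zero])
  set m := min (‖J14‖) (‖J23‖) with hm'
  have hm : 0 < m := lt_min (norm_pos_iff.mpr h14) (norm_pos_iff.mpr h23)
  set B := ‖A‖ + ‖J14‖ + ‖J23‖ with hB'
  have hB : 0 ≤ B := by positivity
  refine ⟨max 1 (2 * B / m), le_max_left _ _, m / 2, by positivity, ?_⟩
  intro lam ha
  set y := lam.im with hy
  have hy2 : 2 * B / m ≤ |y| := le_trans (le_max_right _ _) ha
  have hE : |y| ≤ Real.exp (Real.pi * |y|) := by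
    calc |y| ≤ 1 + Real.pi * |y| := by nlinarith [Real.pi_gt_three, abs_nonneg y]
    _ ≤ Real.exp (Real.pi * |y|) := Real.add_one_le_exp _ |>.trans_eq' (by ring_nf)
  have hBle : B ≤ m / 2 * Real.exp (Real.pi * |y|) := by
    have : 2 * B / m ≤ Real.exp (Real.pi * |y|) := hy2.trans hE
    rw [div_le_iff₀ hm] at this
    nlinarith
  have key := delta0_eq' C D lam
  have habsf : ‖Complex.exp (-(I * lam * (Real.pi : ℂ)))‖ = Real.exp (Real.pi * y) := by
    rw [Complex.norm_exp]; congr 1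
    simp [Complex.mul_re, Complex.mul_im]; ring
  have habse : ‖Complex.exp (I * lam * (Real.pi : ℂ))‖ = Real.exp (-(Real.pi * y)) := by
    rw [Complex.norm_exp]; congr 1
    simp [Complex.mul_re, Complex.mul_im]; ring
  have main : m * Real.exp (Real.pi * |y|) - B ≤ ‖Delta0 C D lam‖ := by
    rcases le_or_gt 0 y with hy0 | hy0
    · have hyabs : |y| = y := abs_of_nonneg hy0
      have h1 : m * Real.exp (Real.pi * |y|) ≤
          ‖Complex.exp (-(I * lam * (Real.pi : ℂ))) * J14‖ := by
        rw [norm_mul, habsf, hyabs, mul_comm]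
        exact mul_le_mul_of_nonneg_left (min_le_left _ _) (Real.exp_pos _).le
      have h2 : ‖A - Complex.exp (I * lam * (Real.pi : ℂ)) * J23‖ ≤ B := by
        refine (norm_sub_le _ _).trans ?_
        rw [norm_mul, habse, hB']
        have : Real.exp (-(Real.pi * y)) ≤ 1 :=
          Real.exp_le_one_iff.mpr (by nlinarith [Real.pi_pos])
        nlinarith [norm_nonneg J23, norm_nonneg J14]
      have hsplit : Delta0 C D lam =
          Complex.exp (-(I * lam * (Real.pi : ℂ))) * J14
            + (A - Complex.exp (I * lam * (Real.pi : ℂ)) * J23) := by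
        rw [key]; ring
      rw [hsplit]
      have h3 := norm_sub_le (Complex.exp (-(I * lam * (Real.pi : ℂ))) * J14 +
        (A - Complex.exp (I * lam * (Real.pi : ℂ)) * J23))
        (A - Complex.exp (I * lam * (Real.pi : ℂ)) * J23)
      rw [add_sub_cancel_right] at h3
      linarith
    · have hyabs : |y| = -y := abs_of_neg hy0
      have h1 : m * Real.exp (Real.pi * |y|) ≤
          ‖Complex.exp (I * lam * (Real.pi : ℂ)) * J23‖ := by
        rw [norm_mul, habse, hyabs, show Real.pi * -y = -(Real.pi * y) by ring, mul_comm]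
        exact mul_le_mul_of_nonneg_left (min_le_right _ _) (Real.exp_pos _).le
      have h2 : ‖A + Complex.exp (-(I * lam * (Real.pi : ℂ))) * J14‖ ≤ B := by
        refine (norm_add_le _ _).trans ?_
        rw [norm_mul, habsf, hB']
        have : Real.exp (Real.pi * y) ≤ 1 :=
          Real.exp_le_one_iff.mpr (by nlinarith [Real.pi_pos])
        nlinarith [norm_nonneg J23, norm_nonneg J14]
      have hsplit : Delta0 C D lam =
          -(Complex.exp (I * lam * (Real.pi : ℂ)) * J23)
            + (A + Complex.exp (-(I * lam * (Real.pi : ℂ))) * J14) := by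
        rw [key]; ring
      rw [hsplit]
      have h3 := norm_sub_le (-(Complex.exp (I * lam * (Real.pi : ℂ)) * J23) +
        (A + Complex.exp (-(I * lam * (Real.pi : ℂ))) * J14))
        (A + Complex.exp (-(I * lam * (Real.pi : ℂ))) * J14)
      rw [add_sub_cancel_right, norm_neg] at h3
      linarith
  linarith

end
end

section
/- Let 1 ≤ μ ≤ ν ≤ ∞ and d > 0, and let K : [0,π]² → ℂ be measurable with |K(x,t)| ≤ e^{−d·x}·e^{−d·(π−t)} for a.e. (x,t). Then there is a constant C depending only on μ and ν such that for every f ∈ L_μ[0,π] one has ‖∫₀^π K(·,t)·f(t) dt‖_{L_ν[0,π]} ≤ C·d^{−1 + 1/μ − 1/ν}·‖f‖_{L_μ[0,π]}. -/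
open MeasureTheory Complex Filter Set
open scoped ENNReal

noncomputable section

instance : SFinite mes := by unfold mes; infer_instance

lemma exp_w_lp (p : ℝ≥0∞) (hp : 1 ≤ p) {d : ℝ} (hd : 0 < d) (w : ℝ → ℝ)
    (hw_cont : Continuous w) (hw_pos : ∀ x, 0 < w x)
    (hw_le1 : ∀ x ∈ Icc (0:ℝ) Real.pi, w x ≤ 1)
    (hint : ∀ q : ℝ, 0 < q → ∫ x in (0:ℝ)..Real.pi, w x ^ q ≤ 1 / (q * d)) :
    eLpNorm w p mes ≤ ENNReal.ofReal (d ^ (-(p⁻¹.toReal))) := by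
  have hp0 : p ≠ 0 := by positivity
  by_cases hptop : p = ∞
  · subst hptop
    simp only [ENNReal.inv_top, ENNReal.toReal_zero, neg_zero, Real.rpow_zero]
    rw [eLpNorm_exponent_top]
    have : ∀ᵐ x ∂mes, ‖w x‖ ≤ 1 := by
      rw [mes, ae_restrict_iff' measurableSet_Icc]
      exact .of_forall fun x hx => by
        rw [Real.norm_eq_abs, abs_of_pos (hw_pos x)]; exact hw_le1 x hx
    simpa using eLpNormEssSup_le_of_ae_bound this
  · set q := p.toReal with hqdef
    have hq0 : 0 < q := ENNReal.toReal_pos hp0 hptop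
    have hq1 : 1 ≤ q := by
      have := ENNReal.toReal_mono hptop hp
      simpa using this
    rw [eLpNorm_eq_lintegral_rpow_enorm_toReal hp0 hptop]
    have heq : ∀ x : ℝ, ‖w x‖ₑ ^ q = ENNReal.ofReal (w x ^ q) := by
      intro x
      rw [Real.enorm_eq_ofReal (hw_pos x).le, ENNReal.ofReal_rpow_of_nonneg (hw_pos x).le hq0.le]
    simp_rw [← hqdef, heq]
    have hintg : IntegrableOn (fun x => w x ^ q) (Icc (0:ℝ) Real.pi) volume := by
      apply Continuous.integrableOn_Icc
      exact hw_cont.rpow_const fun x => Or.inl (hw_pos x).ne'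
    have hlint : ∫⁻ x, ENNReal.ofReal (w x ^ q) ∂mes
        = ENNReal.ofReal (∫ x in Icc (0:ℝ) Real.pi, w x ^ q) := by
      rw [mes, ← ofReal_integral_eq_lintegral_ofReal hintg
        (Filter.Eventually.of_forall fun x => Real.rpow_nonneg (hw_pos x).le q)]
    rw [hlint]
    have hIle : ∫ x in Icc (0:ℝ) Real.pi, w x ^ q ≤ 1 / (q * d) := by
      rw [MeasureTheory.integral_Icc_eq_integral_Ioc,
        ← intervalIntegral.integral_of_le Real.pi_pos.le]
      exact hint q hq0
    calc (ENNReal.ofReal (∫ x in Icc (0:ℝ) Real.pi, w x ^ q)) ^ (1 / q)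
        ≤ (ENNReal.ofReal (1 / (q * d))) ^ (1 / q) := by
          exact ENNReal.rpow_le_rpow (ENNReal.ofReal_le_ofReal hIle) (by positivity)
      _ = ENNReal.ofReal ((1 / (q * d)) ^ (1 / q)) := by
          rw [← ENNReal.ofReal_rpow_of_nonneg (by positivity) (by positivity)]
      _ ≤ ENNReal.ofReal (d ^ (-(p⁻¹.toReal))) := by
          apply ENNReal.ofReal_le_ofReal
          have h1 : (1 / (q * d)) ^ (1 / q) = q ^ (-(1/q)) * d ^ (-(1/q)) := by
            rw [one_div (q*d), Real.inv_rpow (by positivity), ← Real.rpow_neg (by positivity),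
              Real.mul_rpow hq0.le hd.le]
          rw [h1]
          have h2 : q ^ (-(1/q)) ≤ 1 :=
            Real.rpow_le_one_of_one_le_of_nonpos hq1 (neg_nonpos.mpr (by positivity))
          have h3 : -(p⁻¹.toReal) = -(1/q) := by
            rw [ENNReal.toReal_inv, one_div]
          rw [h3]
          calc q ^ (-(1/q)) * d ^ (-(1/q)) ≤ 1 * d ^ (-(1/q)) := by
                apply mul_le_mul_of_nonneg_right h2 (Real.rpow_nonneg hd.le _)
            _ = d ^ (-(1/q)) := one_mul _

lemma int_exp_le {c : ℝ} (hc : 0 < c) : ∫ x in (0:ℝ)..Real.pi, Real.exp (-(c * x)) ≤ 1 / c := by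
  have h := intervalIntegral.integral_comp_mul_right (a := (0:ℝ)) (b := Real.pi)
    (fun x => Real.exp x) (neg_ne_zero.mpr hc.ne')
  have heq : ∀ x : ℝ, Real.exp (-(c * x)) = Real.exp (x * -c) := fun x => by ring_nf
  simp_rw [heq]
  rw [h]
  simp only [integral_exp, zero_mul, Real.exp_zero, smul_eq_mul]
  rw [mul_comm Real.pi (-c)]
  have : (-c)⁻¹ * (Real.exp (-c * Real.pi) - 1) = (1 - Real.exp (-(c * Real.pi))) / c := by
    have hc' : c ≠ 0 := hc.ne'
    rw [neg_mul]
    field_simp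
    ring
  rw [this]
  have hb : (1 : ℝ) - Real.exp (-(c * Real.pi)) ≤ 1 := by
    have := (Real.exp_pos (-(c * Real.pi))).le
    linarith
  gcongr

lemma w1_int {d : ℝ} (hd : 0 < d) (q : ℝ) (hq : 0 < q) :
    ∫ x in (0:ℝ)..Real.pi, Real.exp (-d * x) ^ q ≤ 1 / (q * d) := by
  have heq : ∀ x : ℝ, Real.exp (-d * x) ^ q = Real.exp (-((q * d) * x)) := fun x => by
    rw [← Real.exp_mul]; ring_nf
  simp_rw [heq]
  exact int_exp_le (by positivity)

lemma w2_int {d : ℝ} (hd : 0 < d) (q : ℝ) (hq : 0 < q) :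
    ∫ t in (0:ℝ)..Real.pi, Real.exp (-d * (Real.pi - t)) ^ q ≤ 1 / (q * d) := by
  have heq : ∀ t : ℝ, Real.exp (-d * (Real.pi - t)) ^ q = Real.exp (-((q * d) * (Real.pi - t))) :=
    fun t => by rw [← Real.exp_mul]; ring_nf
  simp_rw [heq]
  have h := intervalIntegral.integral_comp_sub_left (a := (0:ℝ)) (b := Real.pi)
    (fun x => Real.exp (-((q * d) * x))) Real.pi
  simp only [sub_self, sub_zero] at h
  rw [h]
  exact int_exp_le (by positivity)

lemma w1_lp (p : ℝ≥0∞) (hp : 1 ≤ p) {d : ℝ} (hd : 0 < d) :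
    eLpNorm (fun x => Real.exp (-d * x)) p mes ≤ ENNReal.ofReal (d ^ (-(p⁻¹.toReal))) := by
  apply exp_w_lp p hp hd
  · exact Real.continuous_exp.comp (continuous_const.mul continuous_id)
  · exact fun x => Real.exp_pos _
  · intro x hx
    rw [show (1:ℝ) = Real.exp 0 by simp]
    exact Real.exp_le_exp.mpr (by nlinarith [hx.1])
  · exact fun q hq => w1_int hd q hq

lemma w2_lp (p : ℝ≥0∞) (hp : 1 ≤ p) {d : ℝ} (hd : 0 < d) :
    eLpNorm (fun t => Real.exp (-d * (Real.pi - t))) p mes ≤ ENNReal.ofReal (d ^ (-(p⁻¹.toReal))) := by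
  apply exp_w_lp p hp hd
  · exact Real.continuous_exp.comp (continuous_const.mul (continuous_const.sub continuous_id))
  · exact fun x => Real.exp_pos _
  · intro x hx
    rw [show (1:ℝ) = Real.exp 0 by simp]
    exact Real.exp_le_exp.mpr (by nlinarith [hx.2])
  · exact fun q hq => w2_int hd q hq


/-- for 1 ≤ μ ≤ ν ≤ ∞ there is a constant C > 0, depending only on μ and ν,
such that for every d > 0 and every measurable kernel K on [0,π]² with
|K(x,t)| ≤ e^{−dx}·e^{−d(π−t)} a.e., the operator f ↦ ∫₀^π K(·,t) f(t) dt maps L_μ[0,π] to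
L_ν[0,π] with norm at most C·d^{−1+1/μ−1/ν}. -/
theorem exp_product_kernel_estimate (mu nu : ℝ≥0∞) (hmu : 1 ≤ mu) (hmunu : mu ≤ nu) :
    ∃ C > (0 : ℝ), ∀ d : ℝ, 0 < d →
      ∀ K : ℝ → ℝ → ℂ, Measurable (fun p : ℝ × ℝ => K p.1 p.2) →
        (∀ᵐ p : ℝ × ℝ ∂(volume.restrict (Set.Icc (0:ℝ) Real.pi ×ˢ Set.Icc (0:ℝ) Real.pi)),
          ‖K p.1 p.2‖ ≤ Real.exp (-d * p.1) * Real.exp (-d * (Real.pi - p.2))) →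
        ∀ f : ℝ → ℂ, MeasureTheory.MemLp f mu mes →
          eLpNorm (fun x => ∫ t in (0:ℝ)..Real.pi, K x t * f t) nu mes ≤
            ENNReal.ofReal (C * d ^ (-1 + mu⁻¹.toReal - nu⁻¹.toReal)) * eLpNorm f mu mes := by
  refine ⟨1, one_pos, fun d hd K hKmeas hKbd f hf => ?_⟩
  have hnu : (1:ℝ≥0∞) ≤ nu := hmu.trans hmunu
  -- conjugate exponent of mu
  set mu' : ℝ≥0∞ := (1 - mu⁻¹)⁻¹ with hmu'def
  have hmuinv : mu⁻¹ ≤ 1 := ENNReal.inv_le_one.mpr hmu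
  have hmu'inv : mu'⁻¹ = 1 - mu⁻¹ := by rw [hmu'def, inv_inv]
  have hmu'1 : 1 ≤ mu' := by
    rw [← ENNReal.inv_le_one, hmu'inv]; exact tsub_le_self
  have hconj : 1 / (1:ℝ≥0∞) = 1 / mu' + 1 / mu := by
    simp only [one_div]
    rw [hmu'inv, tsub_add_cancel_of_le hmuinv, inv_one]
  set W : ℝ → ℝ := fun t => Real.exp (-d * (Real.pi - t)) with hWdef
  have hW : eLpNorm W mu' mes ≤ ENNReal.ofReal (d ^ (-(mu'⁻¹.toReal))) := w2_lp mu' hmu'1 hd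
  set B : ℝ≥0∞ := ∫⁻ t, (ENNReal.ofReal (W t)) * ‖f t‖₊ ∂mes with hBdef
  -- Hölder
  have hB : B ≤ eLpNorm W mu' mes * eLpNorm f mu mes := by
    have h1 : B = eLpNorm (W • f) 1 mes := by
      rw [eLpNorm_one_eq_lintegral_enorm]
      apply lintegral_congr
      intro t
      rw [Pi.smul_apply', enorm_smul,
        Real.enorm_eq_ofReal (Real.exp_pos _).le, enorm_eq_nnnorm]
    rw [h1]
    exact eLpNorm_smul_le_mul_eLpNorm hf.1
      ((Real.continuous_exp.comp (continuous_const.mul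
        (continuous_const.sub continuous_id))).aestronglyMeasurable)
        (hpqr := ⟨by simpa only [one_div] using hconj.symm⟩)
  have hWlt : eLpNorm W mu' mes < ⊤ := hW.trans_lt ENNReal.ofReal_lt_top
  have hBtop : B ≠ ⊤ := (hB.trans_lt (ENNReal.mul_lt_top hWlt hf.2)).ne
  -- pointwise a.e. bound
  have hprod : (volume.restrict (Set.Icc (0:ℝ) Real.pi ×ˢ Set.Icc (0:ℝ) Real.pi))
      = mes.prod mes := by
    rw [mes, Measure.prod_restrict, ← MeasureTheory.Measure.volume_eq_prod]
  rw [hprod] at hKbd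
  have hKae := Measure.ae_ae_of_ae_prod hKbd
  have hae : ∀ᵐ x ∂mes, (‖∫ t in (0:ℝ)..Real.pi, K x t * f t‖₊ : ℝ≥0∞)
      ≤ ENNReal.ofReal (Real.exp (-d * x)) * B := by
    filter_upwards [hKae] with x hx
    calc (‖∫ t in (0:ℝ)..Real.pi, K x t * f t‖₊ : ℝ≥0∞)
        = (‖∫ t in Ioc (0:ℝ) Real.pi, K x t * f t‖₊ : ℝ≥0∞) := by
          rw [intervalIntegral.integral_of_le Real.pi_pos.le]
      _ ≤ ∫⁻ t in Ioc (0:ℝ) Real.pi, ‖K x t * f t‖₊ := enorm_integral_le_lintegral_enorm _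
      _ ≤ ∫⁻ t in Icc (0:ℝ) Real.pi, ‖K x t * f t‖₊ :=
          lintegral_mono' (Measure.restrict_mono Ioc_subset_Icc_self le_rfl) le_rfl
      _ ≤ ∫⁻ t, ENNReal.ofReal (Real.exp (-d * x)) * (ENNReal.ofReal (W t) * ‖f t‖₊) ∂mes := by
          rw [← mes] at *
          refine lintegral_mono_ae ?_
          filter_upwards [hx] with t ht
          rw [← enorm_eq_nnnorm (K x t * f t), ← ofReal_norm (K x t * f t), norm_mul,
            ENNReal.ofReal_mul (norm_nonneg _), ofReal_norm (f t), ← mul_assoc,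
            ← ENNReal.ofReal_mul (Real.exp_pos _).le]
          apply mul_le_mul_left (ENNReal.ofReal_le_ofReal ?_)
          exact ht
      _ = ENNReal.ofReal (Real.exp (-d * x)) * B := lintegral_const_mul' _ _ ENNReal.ofReal_ne_top
  -- compare with the explicit majorant
  have hstep : eLpNorm (fun x => ∫ t in (0:ℝ)..Real.pi, K x t * f t) nu mes
      ≤ eLpNorm (fun x => B.toReal * Real.exp (-d * x)) nu mes := by
    apply eLpNorm_mono_nnnorm_ae
    filter_upwards [hae] with x hx
    rw [← ENNReal.coe_le_coe, ← enorm_eq_nnnorm (B.toReal * Real.exp (-d * x)),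
      ← ofReal_norm (B.toReal * Real.exp (-d * x)),
      Real.norm_of_nonneg (by positivity), ENNReal.ofReal_mul ENNReal.toReal_nonneg,
      ENNReal.ofReal_toReal hBtop, mul_comm B]
    exact hx
  have hsmul : eLpNorm (fun x => B.toReal * Real.exp (-d * x)) nu mes
      = B * eLpNorm (fun x => Real.exp (-d * x)) nu mes := by
    have : (fun x => B.toReal * Real.exp (-d * x)) = B.toReal • (fun x => Real.exp (-d * x)) := by
      funext x; simp [smul_eq_mul]
    rw [this, eLpNorm_const_smul, ← ofReal_norm,
      Real.norm_of_nonneg ENNReal.toReal_nonneg, ENNReal.ofReal_toReal hBtop]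
  have hEnu := w1_lp nu hnu hd
  -- final computation
  have hmu'toReal : -(mu'⁻¹.toReal) = -1 + mu⁻¹.toReal := by
    rw [hmu'inv, ENNReal.toReal_sub_of_le hmuinv ENNReal.one_ne_top, ENNReal.toReal_one]
    ring
  calc eLpNorm (fun x => ∫ t in (0:ℝ)..Real.pi, K x t * f t) nu mes
      ≤ B * eLpNorm (fun x => Real.exp (-d * x)) nu mes := hstep.trans_eq hsmul
    _ ≤ (eLpNorm W mu' mes * eLpNorm f mu mes) * ENNReal.ofReal (d ^ (-(nu⁻¹.toReal))) :=
        mul_le_mul' hB hEnu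
    _ ≤ (ENNReal.ofReal (d ^ (-(mu'⁻¹.toReal))) * eLpNorm f mu mes)
          * ENNReal.ofReal (d ^ (-(nu⁻¹.toReal))) :=
        mul_le_mul' (mul_le_mul' hW le_rfl) le_rfl
    _ = ENNReal.ofReal (1 * d ^ (-1 + mu⁻¹.toReal - nu⁻¹.toReal)) * eLpNorm f mu mes := by
        rw [one_mul, mul_right_comm, ← ENNReal.ofReal_mul (Real.rpow_nonneg hd.le _),
          ← Real.rpow_add hd, hmu'toReal]
        ring_nf

end
end

section
/- For every absolutely continuous y : [0,π] → ℂ², the function W·y is absolutely continuous and satisfies, for a.e. x ∈ [0,π], B·(W y)′(x) + P̂(x)·(W y)(x) = W(x)·(B·y′(x) + P(x)·y(x)) − γ·(W y)(x). -/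
open MeasureTheory Complex Filter Finset Set
open scoped ENNReal

noncomputable section

/-- diag(a, b). -/
def diag2 (a b : ℂ) : Matrix (Fin 2) (Fin 2) ℂ := !![a, 0; 0, b]

/-- γ = (1/(2π))·∫₀^π (p₁(t)+p₄(t)) dt. -/
def gam (p1 p4 : ℝ → ℂ) : ℂ :=
  (1 / (2 * (Real.pi : ℂ))) * ∫ t in (0 : ℝ)..Real.pi, (p1 t + p4 t)

/-- φ(x) = γx − ∫₀^x p₁(t) dt. -/
def phi (p1 p4 : ℝ → ℂ) (x : ℝ) : ℂ :=
  gam p1 p4 * (x : ℂ) - ∫ t in (0 : ℝ)..x, p1 t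

/-- ψ(x) = ∫₀^x p₄(t) dt − γx. -/
def psi (p1 p4 : ℝ → ℂ) (x : ℝ) : ℂ :=
  (∫ t in (0 : ℝ)..x, p4 t) - gam p1 p4 * (x : ℂ)

/-- W(x) = diag(e^{−iφ(x)}, e^{−iψ(x)}). -/
def Wmat (p1 p4 : ℝ → ℂ) (x : ℝ) : Matrix (Fin 2) (Fin 2) ℂ :=
  diag2 (Complex.exp (-(I * phi p1 p4 x))) (Complex.exp (-(I * psi p1 p4 x)))

/-- The potential P(x) = [[p₁(x), p₂(x)], [p₃(x), p₄(x)]]. -/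
def Pmat (p1 p2 p3 p4 : ℝ → ℂ) (x : ℝ) : Matrix (Fin 2) (Fin 2) ℂ :=
  !![p1 x, p2 x; p3 x, p4 x]

/-- The transformed potential
P̂(x) = [[0, p₂(x)·e^{i(ψ(x)−φ(x))}], [p₃(x)·e^{i(φ(x)−ψ(x))}, 0]]. -/
def Phat (p1 p2 p3 p4 : ℝ → ℂ) (x : ℝ) : Matrix (Fin 2) (Fin 2) ℂ :=
  !![0, p2 x * Complex.exp (I * (psi p1 p4 x - phi p1 p4 x));
     p3 x * Complex.exp (I * (phi p1 p4 x - psi p1 p4 x)), 0]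


/-- w₁(x) = e^{-iφ(x)} as a primitive exponential. -/
def W1aux (p1 p4 : ℝ → ℂ) (x : ℝ) : ℂ :=
  Complex.exp (∫ s in (0:ℝ)..x, I * (p1 s - gam p1 p4))

/-- w₂(x) = e^{-iψ(x)} as a primitive exponential. -/
def W2aux (p1 p4 : ℝ → ℂ) (x : ℝ) : ℂ :=
  Complex.exp (∫ s in (0:ℝ)..x, I * (gam p1 p4 - p4 s))

namespace GaugeAux

open intervalIntegral

/-- Fubini's theorem for primitives: the key bilinear identity. -/
lemma fubini_primitive (x : ℝ) (hx : 0 ≤ x) (f g : ℝ → ℂ)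
    (hf : IntervalIntegrable f volume 0 x) (hg : IntervalIntegrable g volume 0 x)
    (hFg : IntervalIntegrable (fun t => (∫ s in (0:ℝ)..t, f s) * g t) volume 0 x)
    (hfG : IntervalIntegrable (fun t => f t * ∫ s in (0:ℝ)..t, g s) volume 0 x) :
    (∫ t in (0:ℝ)..x, (∫ s in (0:ℝ)..t, f s) * g t)
      + (∫ t in (0:ℝ)..x, f t * ∫ s in (0:ℝ)..t, g s)
      = (∫ s in (0:ℝ)..x, f s) * ∫ s in (0:ℝ)..x, g s := by
  have hfi : IntegrableOn f (Set.Ioc 0 x) :=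
    (intervalIntegrable_iff_integrableOn_Ioc_of_le hx).1 hf
  have hgi : IntegrableOn g (Set.Ioc 0 x) :=
    (intervalIntegrable_iff_integrableOn_Ioc_of_le hx).1 hg
  set ν := volume.restrict (Set.Ioc (0:ℝ) x) with hν
  set H : ℝ × ℝ → ℂ := fun p => f p.2 * g p.1 with hHdef
  have hHint : Integrable H (ν.prod ν) := by
    have h := MeasureTheory.Integrable.mul_prod (hgi : Integrable g ν) (hfi : Integrable f ν)
    have : H = fun z : ℝ × ℝ => g z.1 * f z.2 := funext fun z => mul_comm _ _
    rw [this]; exact h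
  set S1 : Set (ℝ × ℝ) := {p | p.2 < p.1} ∩ {p | 0 < p.2} with hS1def
  set S2 : Set (ℝ × ℝ) := {p | p.1 ≤ p.2} ∩ {p | 0 < p.1} with hS2def
  set S2p : Set (ℝ × ℝ) := {p | p.2 ≤ p.1} ∩ {p | 0 < p.2} with hS2pdef
  have hS1 : MeasurableSet S1 :=
    (measurableSet_lt measurable_snd measurable_fst).inter
      (measurableSet_lt measurable_const measurable_snd)
  have hS2 : MeasurableSet S2 :=
    (measurableSet_le measurable_fst measurable_snd).inter
      (measurableSet_lt measurable_const measurable_fst)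
  have hT1 : (∫ t in (0:ℝ)..x, (∫ s in (0:ℝ)..t, f s) * g t)
      = ∫ z, S1.indicator H z ∂(ν.prod ν) := by
    rw [integral_of_le hx]
    have hstep : ∀ t ∈ Set.Ioc (0:ℝ) x,
        (∫ s in (0:ℝ)..t, f s) * g t = ∫ s, S1.indicator H (t, s) ∂ν := by
      intro t ht
      have hin : (fun s => S1.indicator H (t, s))
          = (Set.Ioo (0:ℝ) t).indicator (fun s => f s * g t) := by
        funext s
        by_cases hs : s ∈ Set.Ioo (0:ℝ) t
        · rw [Set.indicator_of_mem hs,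
            Set.indicator_of_mem (show (t, s) ∈ S1 from ⟨hs.2, hs.1⟩)]
        · rw [Set.indicator_of_notMem hs, Set.indicator_of_notMem
            (show (t, s) ∉ S1 from fun hmem => hs ⟨hmem.2, hmem.1⟩)]
      rw [hin, MeasureTheory.integral_indicator measurableSet_Ioo, hν,
        Measure.restrict_restrict measurableSet_Ioo,
        show Set.Ioo (0:ℝ) t ∩ Set.Ioc 0 x = Set.Ioo (0:ℝ) t from
          Set.inter_eq_self_of_subset_left (by intro s hs; exact ⟨hs.1, hs.2.le.trans ht.2⟩),
        MeasureTheory.integral_mul_const, integral_of_le ht.1.le,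
        MeasureTheory.integral_Ioc_eq_integral_Ioo]
    rw [MeasureTheory.setIntegral_congr_fun measurableSet_Ioc hstep]
    exact MeasureTheory.integral_integral (hHint.indicator hS1)
  have hT2 : (∫ t in (0:ℝ)..x, f t * ∫ s in (0:ℝ)..t, g s)
      = ∫ z, S2.indicator H z ∂(ν.prod ν) := by
    rw [integral_of_le hx]
    have hstep : ∀ t ∈ Set.Ioc (0:ℝ) x,
        f t * (∫ s in (0:ℝ)..t, g s)
          = ∫ s, S2p.indicator (fun p : ℝ × ℝ => f p.1 * g p.2) (t, s) ∂ν := by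
      intro t ht
      have hin : (fun s => S2p.indicator (fun p : ℝ × ℝ => f p.1 * g p.2) (t, s))
          = (Set.Ioc (0:ℝ) t).indicator (fun s => f t * g s) := by
        funext s
        by_cases hs : s ∈ Set.Ioc (0:ℝ) t
        · rw [Set.indicator_of_mem hs,
            Set.indicator_of_mem (show (t, s) ∈ S2p from ⟨hs.2, hs.1⟩)]
        · rw [Set.indicator_of_notMem hs, Set.indicator_of_notMem
            (show (t, s) ∉ S2p from fun hmem => hs ⟨hmem.2, hmem.1⟩)]
      rw [hin, MeasureTheory.integral_indicator measurableSet_Ioc, hν,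
        Measure.restrict_restrict measurableSet_Ioc,
        show Set.Ioc (0:ℝ) t ∩ Set.Ioc 0 x = Set.Ioc (0:ℝ) t from
          Set.inter_eq_self_of_subset_left (by intro s hs; exact ⟨hs.1, hs.2.trans ht.2⟩),
        MeasureTheory.integral_const_mul, integral_of_le ht.1.le]
    rw [MeasureTheory.setIntegral_congr_fun measurableSet_Ioc hstep]
    have hswap := MeasureTheory.integral_prod_swap (μ := ν) (ν := ν) (S2.indicator H)
    have heq2 : (fun z : ℝ × ℝ => S2.indicator H z.swap)
        = S2p.indicator (fun p : ℝ × ℝ => f p.1 * g p.2) := by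
      funext z
      by_cases hz : z ∈ S2p
      · rw [Set.indicator_of_mem hz]
        have : z.swap ∈ S2 := ⟨hz.1, hz.2⟩
        rw [Set.indicator_of_mem this]
        rfl
      · have : z.swap ∉ S2 := fun hmem => hz ⟨hmem.1, hmem.2⟩
        rw [Set.indicator_of_notMem hz, Set.indicator_of_notMem this]
    rw [heq2] at hswap
    rw [← hswap]
    have hintswap : Integrable (fun z : ℝ × ℝ => S2.indicator H z.swap) (ν.prod ν) := by
      rw [heq2]
      have hS2p : MeasurableSet S2p :=
        (measurableSet_le measurable_snd measurable_fst).inter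
          (measurableSet_lt measurable_const measurable_snd)
      have hH2 : Integrable (fun p : ℝ × ℝ => f p.1 * g p.2) (ν.prod ν) :=
        MeasureTheory.Integrable.mul_prod (hfi : Integrable f ν) (hgi : Integrable g ν)
      exact hH2.indicator hS2p
    exact MeasureTheory.integral_integral hintswap
  rw [hT1, hT2, ← MeasureTheory.integral_add (hHint.indicator hS1) (hHint.indicator hS2)]
  have hprodres : ν.prod ν = (volume.prod volume).restrict
      (Set.Ioc (0:ℝ) x ×ˢ Set.Ioc (0:ℝ) x) := Measure.prod_restrict _ _
  rw [hprodres]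
  rw [MeasureTheory.setIntegral_congr_fun (measurableSet_Ioc.prod measurableSet_Ioc)
    (g := H) ?_]
  · rw [← hprodres]
    have h := MeasureTheory.integral_prod_mul (μ := ν) (ν := ν) g f
    have hHeq : H = fun z : ℝ × ℝ => g z.1 * f z.2 := funext fun z => mul_comm _ _
    rw [hHeq, h, integral_of_le hx, integral_of_le hx, mul_comm]
  · intro z hz
    rcases lt_or_ge z.2 z.1 with hlt | hle
    · have h1 : z ∈ S1 := ⟨hlt, hz.2.1⟩
      have h2 : z ∉ S2 := fun hmem => absurd hmem.1 (not_le.2 hlt)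
      simp [Set.indicator_of_mem h1, Set.indicator_of_notMem h2]
    · have h1 : z ∉ S1 := fun hmem => absurd hmem.1 (not_lt.2 hle)
      have h2 : z ∈ S2 := ⟨hle, hz.1.1⟩
      simp [Set.indicator_of_notMem h1, Set.indicator_of_mem h2]

/-- Product rule for literal primitives. -/
lemma prim_mul (b : ℝ) (hb : 0 ≤ b) (f g : ℝ → ℂ) (a c : ℂ)
    (hf : IntervalIntegrable f volume 0 b) (hg : IntervalIntegrable g volume 0 b) :
    IntervalIntegrable (fun t => (a + ∫ s in (0:ℝ)..t, f s) * g t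
        + f t * (c + ∫ s in (0:ℝ)..t, g s)) volume 0 b ∧
    ∀ x ∈ Set.Icc (0:ℝ) b, (a + ∫ s in (0:ℝ)..x, f s) * (c + ∫ s in (0:ℝ)..x, g s)
        = a * c + ∫ t in (0:ℝ)..x, ((a + ∫ s in (0:ℝ)..t, f s) * g t
            + f t * (c + ∫ s in (0:ℝ)..t, g s)) := by
  have hFc : ContinuousOn (fun t => a + ∫ s in (0:ℝ)..t, f s) (Set.uIcc 0 b) :=
    continuousOn_const.add (continuousOn_primitive_interval' hf Set.left_mem_uIcc)
  have hGc : ContinuousOn (fun t => c + ∫ s in (0:ℝ)..t, g s) (Set.uIcc 0 b) :=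
    continuousOn_const.add (continuousOn_primitive_interval' hg Set.left_mem_uIcc)
  have h1 : IntervalIntegrable (fun t => (a + ∫ s in (0:ℝ)..t, f s) * g t) volume 0 b :=
    hg.continuousOn_mul hFc
  have h2 : IntervalIntegrable (fun t => f t * (c + ∫ s in (0:ℝ)..t, g s)) volume 0 b :=
    hf.mul_continuousOn hGc
  refine ⟨h1.add h2, ?_⟩
  intro x hx
  have hxb : x ∈ Set.uIcc (0:ℝ) b := by rw [Set.uIcc_of_le hb]; exact hx
  have hsub : Set.uIcc (0:ℝ) x ⊆ Set.uIcc 0 b := Set.uIcc_subset_uIcc Set.left_mem_uIcc hxb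
  have hf' := hf.mono_set hsub
  have hg' := hg.mono_set hsub
  have hFg' : IntervalIntegrable (fun t => (∫ s in (0:ℝ)..t, f s) * g t) volume 0 x :=
    hg'.continuousOn_mul (continuousOn_primitive_interval' hf' Set.left_mem_uIcc)
  have hfG' : IntervalIntegrable (fun t => f t * ∫ s in (0:ℝ)..t, g s) volume 0 x :=
    hf'.mul_continuousOn (continuousOn_primitive_interval' hg' Set.left_mem_uIcc)
  have hag : IntervalIntegrable (fun t => a * g t) volume 0 x := hg'.const_mul a
  have hfc : IntervalIntegrable (fun t => f t * c) volume 0 x := hf'.mul_const c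
  have expand : Set.EqOn
      (fun t => (a + ∫ s in (0:ℝ)..t, f s) * g t + f t * (c + ∫ s in (0:ℝ)..t, g s))
      (fun t => (a * g t + (∫ s in (0:ℝ)..t, f s) * g t)
        + (f t * c + f t * ∫ s in (0:ℝ)..t, g s)) (Set.uIcc 0 x) := fun t _ => by ring
  rw [intervalIntegral.integral_congr expand,
    intervalIntegral.integral_add (hag.add hFg') (hfc.add hfG'),
    intervalIntegral.integral_add hag hFg', intervalIntegral.integral_add hfc hfG',
    intervalIntegral.integral_const_mul, intervalIntegral.integral_mul_const]
  have key := fubini_primitive x hx.1 f g hf' hg' hFg' hfG'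
  linear_combination -key

/-- Product rule for functions that agree with primitives on `[0, b]`. -/
lemma prim_mul' (b : ℝ) (hb : 0 ≤ b) (F G f g : ℝ → ℂ)
    (hf : IntervalIntegrable f volume 0 b) (hg : IntervalIntegrable g volume 0 b)
    (hF : ∀ x ∈ Set.Icc (0:ℝ) b, F x = F 0 + ∫ s in (0:ℝ)..x, f s)
    (hG : ∀ x ∈ Set.Icc (0:ℝ) b, G x = G 0 + ∫ s in (0:ℝ)..x, g s) :
    IntervalIntegrable (fun t => F t * g t + f t * G t) volume 0 b ∧
    ∀ x ∈ Set.Icc (0:ℝ) b, F x * G x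
      = F 0 * G 0 + ∫ t in (0:ℝ)..x, (F t * g t + f t * G t) := by
  obtain ⟨hint, heq⟩ := prim_mul b hb f g (F 0) (G 0) hf hg
  have hEq : Set.EqOn
      (fun t => (F 0 + ∫ s in (0:ℝ)..t, f s) * g t + f t * (G 0 + ∫ s in (0:ℝ)..t, g s))
      (fun t => F t * g t + f t * G t) (Set.Icc 0 b) := by
    intro t ht
    simp only
    rw [← hF t ht, ← hG t ht]
  constructor
  · rw [intervalIntegrable_iff_integrableOn_Ioc_of_le hb] at hint ⊢
    exact hint.congr_fun (hEq.mono Set.Ioc_subset_Icc_self) measurableSet_Ioc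
  · intro x hx
    have hsub2 : Set.uIcc (0:ℝ) x ⊆ Set.Icc 0 b := by
      rw [Set.uIcc_of_le hx.1]
      exact Set.Icc_subset_Icc_right hx.2
    rw [hF x hx, hG x hx, heq x hx]
    congr 1
    exact intervalIntegral.integral_congr (fun t ht => hEq (hsub2 ht))

/-- Exponential rule: `exp` of a primitive is a primitive. -/
lemma prim_exp (b : ℝ) (hb : 0 ≤ b) (f : ℝ → ℂ) (hf : IntervalIntegrable f volume 0 b) :
    IntervalIntegrable (fun t => f t * Complex.exp (∫ s in (0:ℝ)..t, f s)) volume 0 b ∧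
    ∀ x ∈ Set.Icc (0:ℝ) b, Complex.exp (∫ s in (0:ℝ)..x, f s)
      = 1 + ∫ t in (0:ℝ)..x, f t * Complex.exp (∫ s in (0:ℝ)..t, f s) := by
  set Φ : ℝ → ℂ := fun t => ∫ s in (0:ℝ)..t, f s with hΦdef
  have hΦc : ContinuousOn Φ (Set.uIcc 0 b) :=
    continuousOn_primitive_interval' hf Set.left_mem_uIcc
  have hint : IntervalIntegrable (fun t => f t * Complex.exp (Φ t)) volume 0 b :=
    hf.mul_continuousOn (Complex.continuous_exp.comp_continuousOn hΦc)
  refine ⟨hint, ?_⟩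
  have hΦ0 : Φ 0 = 0 := intervalIntegral.integral_same
  have hpow : ∀ n : ℕ, IntervalIntegrable (fun t => f t * Φ t ^ n) volume 0 b ∧
      ∀ x ∈ Set.Icc (0:ℝ) b, Φ x ^ (n+1) = ((n:ℂ)+1) * ∫ t in (0:ℝ)..x, f t * Φ t ^ n := by
    intro n
    induction n with
    | zero =>
      constructor
      · simpa using hf
      · intro x hx
        simp [hΦdef]
    | succ n ih =>
      have hcont : ContinuousOn (fun t => Φ t ^ (n+1)) (Set.uIcc 0 b) := hΦc.pow _
      have hint1 : IntervalIntegrable (fun t => f t * Φ t ^ (n+1)) volume 0 b :=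
        hf.mul_continuousOn hcont
      refine ⟨hint1, ?_⟩
      have hgi : IntervalIntegrable (fun t => ((n:ℂ)+1) * (f t * Φ t ^ n)) volume 0 b :=
        ih.1.const_mul _
      have hFprim : ∀ x ∈ Set.Icc (0:ℝ) b, Φ x = Φ 0 + ∫ s in (0:ℝ)..x, f s := by
        intro x hx
        rw [hΦ0, zero_add]
      have hGprim : ∀ x ∈ Set.Icc (0:ℝ) b, Φ x ^ (n+1)
          = Φ 0 ^ (n+1) + ∫ s in (0:ℝ)..x, ((n:ℂ)+1) * (f s * Φ s ^ n) := by
        intro x hx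
        rw [intervalIntegral.integral_const_mul, ← ih.2 x hx, hΦ0]
        simp
      obtain ⟨_, heq⟩ := prim_mul' b hb Φ (fun t => Φ t ^ (n+1)) f
        (fun t => ((n:ℂ)+1) * (f t * Φ t ^ n)) hf hgi hFprim hGprim
      intro x hx
      have h1 := heq x hx
      have h0 : Φ 0 * Φ 0 ^ (n+1) = 0 := by rw [hΦ0]; ring
      rw [h0, zero_add] at h1
      have h2 : ∫ t in (0:ℝ)..x, (Φ t * (((n:ℂ)+1) * (f t * Φ t ^ n)) + f t * Φ t ^ (n+1))
          = ∫ t in (0:ℝ)..x, ((n:ℂ)+1+1) * (f t * Φ t ^ (n+1)) :=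
        intervalIntegral.integral_congr (fun t _ => by ring)
      rw [h2, intervalIntegral.integral_const_mul] at h1
      push_cast
      calc Φ x ^ (n+1+1) = Φ x * Φ x ^ (n+1) := by ring
        _ = ((n:ℂ)+1+1) * ∫ t in (0:ℝ)..x, f t * Φ t ^ (n+1) := h1
  intro x hx
  have hx0 : (0:ℝ) ≤ x := hx.1
  have hxb : x ∈ Set.uIcc (0:ℝ) b := by rw [Set.uIcc_of_le hb]; exact hx
  have hsub : Set.uIcc (0:ℝ) x ⊆ Set.uIcc 0 b := Set.uIcc_subset_uIcc Set.left_mem_uIcc hxb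
  obtain ⟨M, hM⟩ :=
    (isCompact_uIcc : IsCompact (Set.uIcc (0:ℝ) b)).exists_bound_of_continuousOn hΦc
  set M' := max M 0 with hM'def
  have hM'0 : (0:ℝ) ≤ M' := le_max_right _ _
  have hMb : ∀ t ∈ Set.Ioc (0:ℝ) x, ‖Φ t‖ ≤ M' := by
    intro t ht
    have : t ∈ Set.uIcc (0:ℝ) b := hsub (by
      rw [Set.uIcc_of_le hx0]; exact Set.Ioc_subset_Icc_self ht)
    exact (hM t this).trans (le_max_left _ _)
  have hun : ∀ n : ℕ, IntegrableOn (fun t => f t * Φ t ^ n / ((Nat.factorial n : ℕ) : ℂ))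
      (Set.Ioc 0 x) := by
    intro n
    exact (intervalIntegrable_iff_integrableOn_Ioc_of_le hx0).1
      (((hpow n).1.mono_set hsub).div_const _)
  have hfInt : IntegrableOn f (Set.Ioc 0 x) :=
    (intervalIntegrable_iff_integrableOn_Ioc_of_le hx0).1 (hf.mono_set hsub)
  have hnorm_sum : Summable
      (fun n : ℕ => ∫ t in Set.Ioc (0:ℝ) x, ‖f t * Φ t ^ n / ((Nat.factorial n : ℕ) : ℂ)‖) := by
    apply Summable.of_nonneg_of_le
      (fun n => MeasureTheory.integral_nonneg (fun t => norm_nonneg _)) (fun n => ?_)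
      ((Real.summable_pow_div_factorial M').mul_right (∫ t in Set.Ioc (0:ℝ) x, ‖f t‖))
    calc ∫ t in Set.Ioc (0:ℝ) x, ‖f t * Φ t ^ n / ((Nat.factorial n : ℕ) : ℂ)‖
        ≤ ∫ t in Set.Ioc (0:ℝ) x, (M' ^ n / (Nat.factorial n : ℝ)) * ‖f t‖ := by
          apply MeasureTheory.setIntegral_mono_on (hun n).norm
            (hfInt.norm.const_mul _) measurableSet_Ioc
          intro t ht
          rw [norm_div, norm_mul, norm_pow]
          have h1 : ‖((Nat.factorial n : ℕ) : ℂ)‖ = (Nat.factorial n : ℝ) := by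
            rw [Complex.norm_natCast]
          rw [h1]
          have h2 : ‖Φ t‖ ^ n ≤ M' ^ n := pow_le_pow_left₀ (norm_nonneg _) (hMb t ht) n
          have h3 : (0:ℝ) < (Nat.factorial n : ℝ) := by positivity
          rw [div_le_iff₀ h3]
          calc ‖f t‖ * ‖Φ t‖ ^ n ≤ ‖f t‖ * M' ^ n := by
                exact mul_le_mul_of_nonneg_left h2 (norm_nonneg _)
            _ = M' ^ n / (Nat.factorial n : ℝ) * ‖f t‖ * (Nat.factorial n : ℝ) := by field_simp
      _ = M' ^ n / (Nat.factorial n : ℝ) * ∫ t in Set.Ioc (0:ℝ) x, ‖f t‖ :=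
          MeasureTheory.integral_const_mul _ _
  have hswap : ∑' n : ℕ, ∫ t in Set.Ioc (0:ℝ) x, f t * Φ t ^ n / ((Nat.factorial n : ℕ) : ℂ)
      = ∫ t in Set.Ioc (0:ℝ) x, f t * Complex.exp (Φ t) := by
    rw [MeasureTheory.integral_tsum_of_summable_integral_norm (fun n => hun n) hnorm_sum]
    apply MeasureTheory.setIntegral_congr_fun measurableSet_Ioc
    intro t _
    have hexp : Complex.exp (Φ t) = ∑' n : ℕ, Φ t ^ n / ((Nat.factorial n : ℕ) : ℂ) := by
      rw [Complex.exp_eq_exp_ℂ, NormedSpace.exp_eq_tsum_div]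
    simp only [mul_div_assoc]
    rw [tsum_mul_left, ← hexp]
  have hterm : ∀ n : ℕ, Φ x ^ (n+1) / ((Nat.factorial (n+1) : ℕ) : ℂ)
      = ∫ t in Set.Ioc (0:ℝ) x, f t * Φ t ^ n / ((Nat.factorial n : ℕ) : ℂ) := by
    intro n
    have hfact : ((Nat.factorial (n+1) : ℕ) : ℂ) = ((n:ℂ)+1) * ((Nat.factorial n : ℕ) : ℂ) := by
      push_cast [Nat.factorial_succ]
      ring
    have hne1 : ((n:ℂ)+1) ≠ 0 := Nat.cast_add_one_ne_zero n
    rw [(hpow n).2 x hx, hfact, intervalIntegral.integral_of_le hx0,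
      MeasureTheory.integral_div, mul_div_mul_left _ _ hne1]
  have hexpx : Complex.exp (Φ x) = ∑' n : ℕ, Φ x ^ n / ((Nat.factorial n : ℕ) : ℂ) := by
    rw [Complex.exp_eq_exp_ℂ, NormedSpace.exp_eq_tsum_div]
  rw [hexpx, Summable.tsum_eq_zero_add (NormedSpace.expSeries_div_summable (Φ x)),
    tsum_congr hterm, hswap, intervalIntegral.integral_of_le hx0]
  norm_num
  rfl

end GaugeAux

/-- for every absolutely continuous y : [0,π] → ℂ², the function W·y is
absolutely continuous and satisfies, for a.e. x ∈ [0,π],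
B·(Wy)′(x) + P̂(x)·(Wy)(x) = W(x)·(B·y′(x) + P(x)·y(x)) − γ·(Wy)(x). -/
theorem gauge_transform_ode (p1 p2 p3 p4 : ℝ → ℂ)
    (hp : ∀ p ∈ [p1, p2, p3, p4],
      MeasureTheory.IntegrableOn p (Set.Icc (0 : ℝ) Real.pi)) :
    ∀ y g : ℝ → Fin 2 → ℂ, IsAC y g →
      ∃ h : ℝ → Fin 2 → ℂ,
        IsAC (fun x => (Wmat p1 p4 x).mulVec (y x)) h ∧
        ∀ᵐ x ∂mes,
          Bmat.mulVec (h x) +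
              (Phat p1 p2 p3 p4 x).mulVec ((Wmat p1 p4 x).mulVec (y x)) =
            (Wmat p1 p4 x).mulVec (Bmat.mulVec (g x) + (Pmat p1 p2 p3 p4 x).mulVec (y x)) -
              gam p1 p4 • (Wmat p1 p4 x).mulVec (y x) := by
  intro y g hy
  obtain ⟨hgint, hyeq⟩ := hy
  have hπ : (0:ℝ) ≤ Real.pi := Real.pi_pos.le
  have hip : ∀ p ∈ [p1, p2, p3, p4], IntervalIntegrable p volume 0 Real.pi := by
    intro p hpmem
    rw [intervalIntegrable_iff_integrableOn_Icc_of_le hπ]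
    exact hp p hpmem
  have hp1 : IntervalIntegrable p1 volume 0 Real.pi := hip p1 (by simp)
  have hp4 : IntervalIntegrable p4 volume 0 Real.pi := hip p4 (by simp)
  have hq1 : IntervalIntegrable (fun t => I * (p1 t - gam p1 p4)) volume 0 Real.pi :=
    (hp1.sub intervalIntegrable_const).const_mul I
  have hq2 : IntervalIntegrable (fun t => I * (gam p1 p4 - p4 t)) volume 0 Real.pi :=
    (intervalIntegrable_const.sub hp4).const_mul I
  obtain ⟨hq1w, hq1e⟩ := GaugeAux.prim_exp Real.pi hπ (fun t => I * (p1 t - gam p1 p4)) hq1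
  obtain ⟨hq2w, hq2e⟩ := GaugeAux.prim_exp Real.pi hπ (fun t => I * (gam p1 p4 - p4 t)) hq2
  have hW1u : ∀ x : ℝ, W1aux p1 p4 x
      = Complex.exp (∫ s in (0:ℝ)..x, I * (p1 s - gam p1 p4)) := fun _ => rfl
  have hW2u : ∀ x : ℝ, W2aux p1 p4 x
      = Complex.exp (∫ s in (0:ℝ)..x, I * (gam p1 p4 - p4 s)) := fun _ => rfl
  simp only [← hW1u] at hq1w hq1e
  simp only [← hW2u] at hq2w hq2e
  have hW10 : W1aux p1 p4 0 = 1 := by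
    rw [hW1u, intervalIntegral.integral_same, Complex.exp_zero]
  have hW20 : W2aux p1 p4 0 = 1 := by
    rw [hW2u, intervalIntegral.integral_same, Complex.exp_zero]
  have hW1prim : ∀ x ∈ Set.Icc (0:ℝ) Real.pi, W1aux p1 p4 x
      = W1aux p1 p4 0 + ∫ t in (0:ℝ)..x, I * (p1 t - gam p1 p4) * W1aux p1 p4 t := by
    intro x hx
    rw [hq1e x hx, hW10]
  have hW2prim : ∀ x ∈ Set.Icc (0:ℝ) Real.pi, W2aux p1 p4 x
      = W2aux p1 p4 0 + ∫ t in (0:ℝ)..x, I * (gam p1 p4 - p4 t) * W2aux p1 p4 t := by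
    intro x hx
    rw [hq2e x hx, hW20]
  have hy0prim : ∀ x ∈ Set.Icc (0:ℝ) Real.pi, y x 0 = y 0 0 + ∫ t in (0:ℝ)..x, g t 0 := by
    intro x hx
    have h := congr_fun (hyeq x hx) 0
    simpa using h
  have hy1prim : ∀ x ∈ Set.Icc (0:ℝ) Real.pi, y x 1 = y 0 1 + ∫ t in (0:ℝ)..x, g t 1 := by
    intro x hx
    have h := congr_fun (hyeq x hx) 1
    simpa using h
  obtain ⟨hh0int, hh0⟩ := GaugeAux.prim_mul' Real.pi hπ (fun t => W1aux p1 p4 t)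
    (fun t => y t 0) (fun t => I * (p1 t - gam p1 p4) * W1aux p1 p4 t)
    (fun t => g t 0) hq1w (hgint 0) hW1prim hy0prim
  obtain ⟨hh1int, hh1⟩ := GaugeAux.prim_mul' Real.pi hπ (fun t => W2aux p1 p4 t)
    (fun t => y t 1) (fun t => I * (gam p1 p4 - p4 t) * W2aux p1 p4 t)
    (fun t => g t 1) hq2w (hgint 1) hW2prim hy1prim
  -- identification of Wmat entries
  have hphi : ∀ z ∈ Set.Icc (0:ℝ) Real.pi,
      Complex.exp (-(I * phi p1 p4 z)) = W1aux p1 p4 z := by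
    intro z hz
    have hint : IntervalIntegrable p1 volume 0 z := hp1.mono_set
      (Set.uIcc_subset_uIcc Set.left_mem_uIcc (by rw [Set.uIcc_of_le hπ]; exact hz))
    rw [hW1u]
    congr 1
    rw [intervalIntegral.integral_const_mul,
      intervalIntegral.integral_sub hint intervalIntegrable_const,
      intervalIntegral.integral_const, phi, sub_zero, Complex.real_smul]
    ring
  have hpsi : ∀ z ∈ Set.Icc (0:ℝ) Real.pi,
      Complex.exp (-(I * psi p1 p4 z)) = W2aux p1 p4 z := by
    intro z hz
    have hint : IntervalIntegrable p4 volume 0 z := hp4.mono_set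
      (Set.uIcc_subset_uIcc Set.left_mem_uIcc (by rw [Set.uIcc_of_le hπ]; exact hz))
    rw [hW2u]
    congr 1
    rw [intervalIntegral.integral_const_mul,
      intervalIntegral.integral_sub intervalIntegrable_const hint,
      intervalIntegral.integral_const, psi, sub_zero, Complex.real_smul]
    ring
  have h0mem : (0:ℝ) ∈ Set.Icc (0:ℝ) Real.pi := ⟨le_refl 0, hπ⟩
  refine ⟨fun x => ![W1aux p1 p4 x * g x 0 + I * (p1 x - gam p1 p4) * W1aux p1 p4 x * y x 0,
    W2aux p1 p4 x * g x 1 + I * (gam p1 p4 - p4 x) * W2aux p1 p4 x * y x 1], ⟨?_, ?_⟩, ?_⟩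
  · intro i
    fin_cases i
    · simpa using hh0int
    · simpa using hh1int
  · intro x hx
    have hWx : ∀ z ∈ Set.Icc (0:ℝ) Real.pi, ∀ v : Fin 2 → ℂ,
        (Wmat p1 p4 z).mulVec v = ![W1aux p1 p4 z * v 0, W2aux p1 p4 z * v 1] := by
      intro z hz v
      funext j
      fin_cases j
      · simp [Wmat, diag2, Matrix.mulVec, dotProduct, Fin.sum_univ_two, hphi z hz]
      · simp [Wmat, diag2, Matrix.mulVec, dotProduct, Fin.sum_univ_two, hpsi z hz]
    beta_reduce
    rw [hWx x hx (y x), hWx 0 h0mem (y 0)]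
    funext i
    fin_cases i
    · simpa using hh0 x hx
    · simpa using hh1 x hx
  · have hmem : ∀ᵐ x ∂mes, x ∈ Set.Icc (0:ℝ) Real.pi := by
      unfold mes
      exact MeasureTheory.ae_restrict_mem measurableSet_Icc
    filter_upwards [hmem] with x hx
    have hC0 : Complex.exp (I * (psi p1 p4 x - phi p1 p4 x)) * W2aux p1 p4 x
        = W1aux p1 p4 x := by
      rw [← hpsi x hx, ← hphi x hx, ← Complex.exp_add]
      congr 1
      ring
    have hC1 : Complex.exp (I * (phi p1 p4 x - psi p1 p4 x)) * W1aux p1 p4 x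
        = W2aux p1 p4 x := by
      rw [← hphi x hx, ← hpsi x hx, ← Complex.exp_add]
      congr 1
      ring
    funext i
    fin_cases i
    · simp [Bmat, Phat, Pmat, Wmat, diag2, Matrix.mulVec, dotProduct,
        Fin.sum_univ_two, Matrix.cons_val', Matrix.cons_val_zero, Matrix.cons_val_one,
        Matrix.head_cons, Matrix.empty_val', Matrix.cons_val_fin_one, Matrix.head_fin_const,
        Fin.mk_zero, Fin.mk_one, Fin.isValue,
        Pi.add_apply, Pi.sub_apply, Pi.smul_apply, smul_eq_mul]
      rw [hphi x hx, hpsi x hx]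
      linear_combination (p2 x * y x 1) * hC0
        - ((p1 x - gam p1 p4) * W1aux p1 p4 x * y x 0) * Complex.I_sq
    · simp [Bmat, Phat, Pmat, Wmat, diag2, Matrix.mulVec, dotProduct,
        Fin.sum_univ_two, Matrix.cons_val', Matrix.cons_val_zero, Matrix.cons_val_one,
        Matrix.head_cons, Matrix.empty_val', Matrix.cons_val_fin_one, Matrix.head_fin_const,
        Fin.mk_zero, Fin.mk_one, Fin.isValue,
        Pi.add_apply, Pi.sub_apply, Pi.smul_apply, smul_eq_mul]
      rw [hphi x hx, hpsi x hx]
      linear_combination (p3 x * y x 0) * hC1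
        + ((gam p1 p4 - p4 x) * W2aux p1 p4 x * y x 1) * Complex.I_sq

end
end
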